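/- arXiv:2603.22045 — 8 statements merged into one kernel-verified Lean document; each statement's English description precedes it below -/
import Mathlib

section
/- Let 0 < r < 1/2 be real. The map t_{−r} sending an infinite binary sequence s : ℕ → {0,1} to ∑_{i≥1} s(i)·(−r)^i is strictly order-preserving from the alternate order on binary sequences to the usual order on ℝ; in particular it is injective. -/
/-- A sequence (indexed from 1) over the alphabet {0,1}. -/
def IsBinary (s : ℕ → ℤ) : Prop := ∀ i, s i = 0 ∨ s i = 1

/-- `s` is a Sturmian word of slope `θ` (floor or ceiling form). -/
def IsSturmian (θ : ℝ) (s : ℕ → ℤ) : Prop :=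
  Irrational θ ∧ θ ∈ Set.Ioo (0:ℝ) 1 ∧
    ∃ ρ : ℝ,
      (∀ n : ℕ, 1 ≤ n → s n = ⌊((n:ℝ)+1)*θ+ρ⌋ - ⌊(n:ℝ)*θ+ρ⌋) ∨
      (∀ n : ℕ, 1 ≤ n → s n = ⌈((n:ℝ)+1)*θ+ρ⌉ - ⌈(n:ℝ)*θ+ρ⌉)

/-- The characteristic Sturmian word of slope `θ`. -/
noncomputable def charWord (θ : ℝ) : ℕ → ℤ := fun n => ⌊((n:ℝ)+1)*θ⌋ - ⌊(n:ℝ)*θ⌋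

/-- `tval r s = ∑_{i ≥ 1} s i * r ^ i`. -/
noncomputable def tval (r : ℝ) (s : ℕ → ℤ) : ℝ := ∑' i : ℕ, (s (i+1) : ℝ) * r^(i+1)

/-- Equality of infinite words (positions ≥ 1). -/
def EqW (s s' : ℕ → ℤ) : Prop := ∀ i, 1 ≤ i → s i = s' i

/-- Strict lexicographic order on infinite words (positions ≥ 1). -/
def LexLt (s s' : ℕ → ℤ) : Prop :=
  ∃ n, 1 ≤ n ∧ (∀ i, 1 ≤ i → i < n → s i = s' i) ∧ s n < s' n

def LexLe (s s' : ℕ → ℤ) : Prop := LexLt s s' ∨ EqW s s'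

/-- Strict alternate order on infinite words. -/
def AltLt (s s' : ℕ → ℤ) : Prop :=
  ∃ n, 1 ≤ n ∧ (∀ i, 1 ≤ i → i < n → s i = s' i) ∧ (-1:ℤ)^n * (s' n - s n) = 1

def AltLe (s s' : ℕ → ℤ) : Prop := AltLt s s' ∨ EqW s s'

/-- The doubling map `D(w₁w₂…) = w₁w₁w₂w₂…`. -/
def Dbl (w : ℕ → ℤ) : ℕ → ℤ := fun n => w ((n+1)/2)

/-- The shift map `T(w₁w₂w₃…) = w₂w₃…`. -/
def Shf (w : ℕ → ℤ) : ℕ → ℤ := fun n => w (n+1)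

/-- The word `a^l s` : the letter `a` repeated `l` times followed by `s`. -/
def Prepend (a : ℤ) (l : ℕ) (s : ℕ → ℤ) : ℕ → ℤ := fun n => if n ≤ l then a else s (n - l)

/-- The finite word `u` followed by the infinite word `s`. -/
def Cat (u : List ℤ) (s : ℕ → ℤ) : ℕ → ℤ :=
  fun n => if n ≤ u.length then u.getD (n-1) 0 else s (n - u.length)

/-- The finite word `u` occurs as a contiguous block of `s` (at a position ≥ 1). -/
def Subword (u : List ℤ) (s : ℕ → ℤ) : Prop :=
  ∃ n, 1 ≤ n ∧ ∀ i, i < u.length → s (n + i) = u.getD i 0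

/-- `s` is aperiodic: not eventually periodic. -/
def Aperiodic (s : ℕ → ℤ) : Prop :=
  ¬ ∃ k, 1 ≤ k ∧ ∃ N, 1 ≤ N ∧ ∀ n, N ≤ n → s n = s (n + k)

/-- `w` has slope `θ`: the averages of its letters tend to `θ`. -/
def HasSlope (w : ℕ → ℤ) (θ : ℝ) : Prop :=
  Filter.Tendsto (fun n : ℕ => (∑ i ∈ Finset.Icc 1 n, (w i : ℝ)) / n)
    Filter.atTop (nhds θ)

/-- The class `S` of words of the form `0^l s` or `1^l s` with `s` Sturmian. -/
def MemS (w : ℕ → ℤ) : Prop :=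
  ∃ a l s θ, (a = (0:ℤ) ∨ a = 1) ∧ IsSturmian θ s ∧ EqW w (Prepend a l s)

/-- The class `𝒟` of words of the form `0^l (D s)` or `1^l (D s)` with `s` Sturmian. -/
def MemD (w : ℕ → ℤ) : Prop :=
  ∃ a l s θ, (a = (0:ℤ) ∨ a = 1) ∧ IsSturmian θ s ∧ EqW w (Prepend a l (Dbl s))

/-- The class `𝒫 = D(Σ^ℕ) ∪ T(D(Σ^ℕ))` with `Σ = {0,1}`. -/
def MemP (w : ℕ → ℤ) : Prop :=
  (∃ u, IsBinary u ∧ EqW w (Dbl u)) ∨ (∃ u, IsBinary u ∧ EqW w (Shf (Dbl u)))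


lemma binary_abs_le (r : ℝ) (h0 : 0 < r) (s : ℕ → ℤ) (hb : IsBinary s) (i : ℕ) :
    |(s (i+1) : ℝ) * (-r)^(i+1)| ≤ r^(i+1) := by
  have : |(s (i+1) : ℝ)| ≤ 1 := by rcases hb (i+1) with h | h <;> simp [h]
  have h2 : |(-r)^(i+1)| = r^(i+1) := by
    rw [abs_pow, abs_neg, abs_of_pos h0]
  calc |(s (i+1) : ℝ) * (-r)^(i+1)| = |(s (i+1) : ℝ)| * |(-r)^(i+1)| := abs_mul _ _
    _ ≤ 1 * r^(i+1) := by rw [h2]; exact mul_le_mul_of_nonneg_right this (by positivity)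
    _ = r^(i+1) := one_mul _

lemma geo_summable (r : ℝ) (h0 : 0 < r) (h1 : r < 1) : Summable (fun i : ℕ => r^(i+1)) := by
  have := summable_geometric_of_lt_one h0.le h1
  exact (summable_nat_add_iff 1).mpr this

lemma binary_summable (r : ℝ) (h0 : 0 < r) (h1 : r < 1) (s : ℕ → ℤ) (hb : IsBinary s) :
    Summable (fun i : ℕ => (s (i+1) : ℝ) * (-r)^(i+1)) := by
  apply Summable.of_norm_bounded (geo_summable r h0 h1)
  intro i
  rw [Real.norm_eq_abs]
  exact binary_abs_le r h0 s hb i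

lemma alt_lt_tval (r : ℝ) (h0 : 0 < r) (h1 : r < 1/2) (s s' : ℕ → ℤ)
    (hb : IsBinary s) (hb' : IsBinary s') (h : AltLt s s') :
    tval (-r) s < tval (-r) s' := by
  obtain ⟨n, hn1, hpre, hsign⟩ := h
  have hr1 : r < 1 := by linarith
  set g : ℕ → ℝ := fun i => ((s' (i+1) : ℝ) - (s (i+1) : ℝ)) * (-r)^(i+1) with hgdef
  have habs : ∀ i, |g i| ≤ r^(i+1) := by
    intro i
    have h3 : |(s' (i+1) : ℝ) - (s (i+1) : ℝ)| ≤ 1 := by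
      rcases hb' (i+1) with h | h <;> rcases hb (i+1) with h' | h' <;>
        rw [abs_le] <;> constructor <;> simp [h, h']
    have h4 : |(-r)^(i+1)| = r^(i+1) := by rw [abs_pow, abs_neg, abs_of_pos h0]
    calc |g i| = |(s' (i+1) : ℝ) - (s (i+1) : ℝ)| * |(-r)^(i+1)| := abs_mul _ _
      _ ≤ r^(i+1) := by rw [h4]; simpa using mul_le_mul_of_nonneg_right h3 (le_of_lt (by positivity : (0:ℝ) < r^(i+1)))
  have hg : Summable g := by
    apply Summable.of_norm_bounded (geo_summable r h0 hr1)
    intro i; rw [Real.norm_eq_abs]; exact habs i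
  have hs : Summable (fun i : ℕ => (s (i+1) : ℝ) * (-r)^(i+1)) := binary_summable r h0 hr1 s hb
  have hs' : Summable (fun i : ℕ => (s' (i+1) : ℝ) * (-r)^(i+1)) := binary_summable r h0 hr1 s' hb'
  have hdiff : tval (-r) s' - tval (-r) s = ∑' i, g i := by
    rw [tval, tval, ← Summable.tsum_sub hs' hs]
    congr 1; funext i; ring
  rw [← sub_pos, hdiff]
  -- split off prefix
  obtain ⟨k, rfl⟩ : ∃ k, n = k + 1 := ⟨n - 1, by omega⟩
  have hsplit : (∑ i ∈ Finset.range k, g i) + ∑' i, g (i + k) = ∑' i, g i :=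
    Summable.sum_add_tsum_nat_add k hg
  have hzero : ∀ i ∈ Finset.range k, g i = 0 := by
    intro i hi
    have : s (i+1) = s' (i+1) := hpre (i+1) (by omega) (by simp at hi; omega)
    simp [hgdef, this]
  have hgshift : Summable (fun i => g (i + k)) := (summable_nat_add_iff k).mpr hg
  have hsplit2 : ∑' i, g (i + k) = g k + ∑' i, g (i + 1 + k) := by
    rw [Summable.tsum_eq_zero_add hgshift]
    simp
  -- value of g k
  have hsn : (s' (k+1) : ℝ) - (s (k+1) : ℝ) = (-1 : ℝ)^(k+1) := by
    have h2 : s' (k+1) - s (k+1) = (-1 : ℤ)^(k+1) := by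
      rcases Nat.even_or_odd (k+1) with h | h
      · rw [h.neg_one_pow] at hsign ⊢; linarith
      · rw [h.neg_one_pow] at hsign ⊢; linarith
    have := congrArg (fun z : ℤ => (z : ℝ)) h2
    push_cast at this
    linarith [this]
  have hgk : g k = r^(k+1) := by
    rw [hgdef]
    simp only
    rw [hsn]
    rw [neg_pow r (k+1)]
    rcases Nat.even_or_odd (k+1) with h | h
    · rw [h.neg_one_pow]; ring
    · rw [h.neg_one_pow]; ring
  -- tail bound
  set T := ∑' i, g (i + 1 + k) with hT
  have htail_sum : Summable (fun i => g (i + 1 + k)) := by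
    have : Summable (fun n => g (n + (k + 1))) := (summable_nat_add_iff (k+1)).mpr hg
    convert this using 2 with i
    simp only [show i + 1 + k = i + (k + 1) by omega]
  have hbound_sum : Summable (fun i : ℕ => r^(i + 1 + k + 1)) := by
    have : Summable (fun i : ℕ => r^i) := summable_geometric_of_lt_one h0.le hr1
    have h2 : Summable (fun i : ℕ => r^i * r^(k+2)) := this.mul_right _
    convert h2 using 2 with i
    ring
  have hTabs : |T| ≤ ∑' i : ℕ, r^(i + 1 + k + 1) := by
    calc |T| ≤ ∑' i, |g (i + 1 + k)| := by
          simpa using norm_tsum_le_tsum_norm (f := fun i => g (i+1+k)) (by simpa using htail_sum.abs)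
      _ ≤ ∑' i : ℕ, r^(i + 1 + k + 1) := by
          apply Summable.tsum_le_tsum _ htail_sum.abs hbound_sum
          intro i
          exact habs (i + 1 + k)
  have hgeo : ∑' i : ℕ, r^(i + 1 + k + 1) = r^(k+2) / (1 - r) := by
    have h2 : (fun i : ℕ => r^(i + 1 + k + 1)) = fun i : ℕ => r^i * r^(k+2) := by
      funext i; ring
    rw [h2, tsum_mul_right, tsum_geometric_of_lt_one h0.le hr1]
    rw [div_eq_mul_inv, mul_comm]
  have hTlt : |T| < r^(k+1) := by
    rw [hgeo] at hTabs
    have hrk : (0:ℝ) < r^(k+1) := by positivity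
    have hx : r^(k+2) / (1 - r) < r^(k+1) := by
      rw [div_lt_iff₀ (by linarith)]
      have he : r^(k+2) = r^(k+1) * r := by ring
      nlinarith [hrk]
    linarith
  have : 0 < ∑' i, g i := by
    rw [← hsplit, Finset.sum_eq_zero hzero, hsplit2, hgk]
    have := abs_lt.mp hTlt
    linarith [this.1]
  exact this

theorem stmt2 (r : ℝ) (h0 : 0 < r) (h1 : r < 1/2) :
    (∀ s s' : ℕ → ℤ, IsBinary s → IsBinary s' → AltLt s s' → tval (-r) s < tval (-r) s') ∧
    (∀ s s' : ℕ → ℤ, IsBinary s → IsBinary s' → tval (-r) s = tval (-r) s' → EqW s s') := by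
  have part1 : ∀ s s' : ℕ → ℤ, IsBinary s → IsBinary s' → AltLt s s' → tval (-r) s < tval (-r) s' :=
    fun s s' hb hb' h => alt_lt_tval r h0 h1 s s' hb hb' h
  refine ⟨part1, ?_⟩
  intro s s' hb hb' heq
  by_contra hne
  rw [EqW] at hne
  push_neg at hne
  obtain ⟨m, hm1, hmne⟩ := hne
  have hex : ∃ m, 1 ≤ m ∧ s m ≠ s' m := ⟨m, hm1, hmne⟩
  classical
  obtain ⟨n, ⟨hn1, hnne⟩, hmin⟩ :
      ∃ n, (1 ≤ n ∧ s n ≠ s' n) ∧ ∀ i, i < n → ¬(1 ≤ i ∧ s i ≠ s' i) :=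
    ⟨Nat.find hex, Nat.find_spec hex, fun i hi => Nat.find_min hex hi⟩
  have hpre : ∀ i, 1 ≤ i → i < n → s i = s' i := by
    intro i hi1 hin
    by_contra h
    exact hmin i hin ⟨hi1, h⟩
  have hval : (-1:ℤ)^n * (s' n - s n) = 1 ∨ (-1:ℤ)^n * (s n - s' n) = 1 := by
    have h1' := hb n
    have h2' := hb' n
    rcases Nat.even_or_odd n with h | h
    · rw [h.neg_one_pow]
      omega
    · rw [h.neg_one_pow]
      omega
  rcases hval with h | h
  · exact absurd heq (ne_of_lt (part1 s s' hb hb' ⟨n, hn1, hpre, h⟩))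
  · exact absurd heq.symm (ne_of_lt (part1 s' s hb' hb ⟨n, hn1, fun i a b => (hpre i a b).symm, h⟩))
end

section
/- Let 0 < r < 1 and let s and s' be Sturmian words over {0,1} of the same slope θ. Then |t_r(s') − t_r(s)| ≤ r. Moreover, if s ≺_lex s' strictly, then t_r(s) < t_r(s'). -/
lemma floor_two_val (z δ : ℝ) : ⌊z+δ⌋ - ⌊z⌋ = ⌊δ⌋ ∨ ⌊z+δ⌋ - ⌊z⌋ = ⌊δ⌋ + 1 := by
  have h1 : ⌊z⌋ + ⌊δ⌋ ≤ ⌊z+δ⌋ := by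
    apply Int.le_floor.mpr; push_cast
    exact add_le_add (Int.floor_le z) (Int.floor_le δ)
  have h2 : ⌊z+δ⌋ < ⌊z⌋ + ⌊δ⌋ + 2 := by
    apply Int.floor_lt.mpr; push_cast
    linarith [Int.lt_floor_add_one z, Int.lt_floor_add_one δ]
  omega

lemma ceil_two_val (z δ : ℝ) : ⌈z+δ⌉ - ⌈z⌉ = ⌈δ⌉ - 1 ∨ ⌈z+δ⌉ - ⌈z⌉ = (⌈δ⌉ - 1) + 1 := by
  have h1 : ⌈z+δ⌉ ≤ ⌈z⌉ + ⌈δ⌉ := by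
    apply Int.ceil_le.mpr; push_cast
    exact add_le_add (Int.le_ceil z) (Int.le_ceil δ)
  have h2 : ⌈z⌉ + ⌈δ⌉ - 2 < ⌈z+δ⌉ := by
    apply Int.lt_ceil.mpr; push_cast
    linarith [Int.ceil_lt_add_one z, Int.ceil_lt_add_one δ]
  omega

lemma ceil_sub_floor (z δ : ℝ) : ⌈z+δ⌉ - ⌊z⌋ = ⌈δ⌉ ∨ ⌈z+δ⌉ - ⌊z⌋ = ⌈δ⌉ + 1 := by
  have h1 : ⌈z+δ⌉ ≤ ⌊z⌋ + ⌈δ⌉ + 1 := by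
    apply Int.ceil_le.mpr; push_cast
    linarith [Int.lt_floor_add_one z, Int.le_ceil δ]
  have h2 : ⌊z⌋ + ⌈δ⌉ - 1 < ⌈z+δ⌉ := by
    apply Int.lt_ceil.mpr; push_cast
    linarith [Int.floor_le z, Int.ceil_lt_add_one δ]
  omega

lemma floor_sub_ceil (z δ : ℝ) : ⌊z+δ⌋ - ⌈z⌉ = ⌊δ⌋ - 1 ∨ ⌊z+δ⌋ - ⌈z⌉ = (⌊δ⌋ - 1) + 1 := by
  have h1 : ⌊z+δ⌋ < ⌈z⌉ + ⌊δ⌋ + 1 := by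
    apply Int.floor_lt.mpr; push_cast
    linarith [Int.le_ceil z, Int.lt_floor_add_one δ]
  have h2 : ⌈z⌉ + ⌊δ⌋ - 1 ≤ ⌊z+δ⌋ := by
    apply Int.le_floor.mpr; push_cast
    linarith [Int.ceil_lt_add_one z, Int.floor_le δ]
  omega

lemma sturmian_F (θ : ℝ) (s : ℕ → ℤ) (hs : IsSturmian θ s) :
    ∃ F : ℕ → ℤ, (∀ k : ℕ, s (k+1) = F (k+1) - F k) ∧
      ((∃ ρ, ∀ k : ℕ, F k = ⌊((k:ℝ)+1)*θ+ρ⌋) ∨ (∃ ρ, ∀ k : ℕ, F k = ⌈((k:ℝ)+1)*θ+ρ⌉)) := by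
  obtain ⟨-, -, ρ, h | h⟩ := hs
  · refine ⟨fun k => ⌊((k:ℝ)+1)*θ+ρ⌋, fun k => ?_, Or.inl ⟨ρ, fun k => rfl⟩⟩
    have := h (k+1) (by omega)
    push_cast at this ⊢
    convert this using 3
  · refine ⟨fun k => ⌈((k:ℝ)+1)*θ+ρ⌉, fun k => ?_, Or.inr ⟨ρ, fun k => rfl⟩⟩
    have := h (k+1) (by omega)
    push_cast at this ⊢
    convert this using 3

lemma F_two_val (θ : ℝ) (F F' : ℕ → ℤ)
    (hF : (∃ ρ, ∀ k : ℕ, F k = ⌊((k:ℝ)+1)*θ+ρ⌋) ∨ (∃ ρ, ∀ k : ℕ, F k = ⌈((k:ℝ)+1)*θ+ρ⌉))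
    (hF' : (∃ ρ, ∀ k : ℕ, F' k = ⌊((k:ℝ)+1)*θ+ρ⌋) ∨ (∃ ρ, ∀ k : ℕ, F' k = ⌈((k:ℝ)+1)*θ+ρ⌉)) :
    ∃ c : ℤ, ∀ k : ℕ, F' k - F k = c ∨ F' k - F k = c + 1 := by
  obtain ⟨ρ, h⟩ | ⟨ρ, h⟩ := hF <;> obtain ⟨ρ', h'⟩ | ⟨ρ', h'⟩ := hF'
  · exact ⟨⌊ρ'-ρ⌋, fun k => by
      rw [h, h', show ((k:ℝ)+1)*θ+ρ' = (((k:ℝ)+1)*θ+ρ)+(ρ'-ρ) from by ring]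
      exact floor_two_val _ _⟩
  · exact ⟨⌈ρ'-ρ⌉, fun k => by
      rw [h, h', show ((k:ℝ)+1)*θ+ρ' = (((k:ℝ)+1)*θ+ρ)+(ρ'-ρ) from by ring]
      exact ceil_sub_floor _ _⟩
  · exact ⟨⌊ρ'-ρ⌋ - 1, fun k => by
      rw [h, h', show ((k:ℝ)+1)*θ+ρ' = (((k:ℝ)+1)*θ+ρ)+(ρ'-ρ) from by ring]
      exact floor_sub_ceil _ _⟩
  · exact ⟨⌈ρ'-ρ⌉ - 1, fun k => by
      rw [h, h', show ((k:ℝ)+1)*θ+ρ' = (((k:ℝ)+1)*θ+ρ)+(ρ'-ρ) from by ring]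
      exact ceil_two_val _ _⟩

lemma sturmian_partial (θ : ℝ) (s s' : ℕ → ℤ) (hs : IsSturmian θ s) (hs' : IsSturmian θ s') :
    ∃ e : ℤ, (e = 0 ∨ e = -1) ∧ ∀ n : ℕ,
      (∑ i ∈ Finset.range n, (s' (i+1) - s (i+1))) = e ∨
      (∑ i ∈ Finset.range n, (s' (i+1) - s (i+1))) = e + 1 := by
  obtain ⟨F, hFs, hFform⟩ := sturmian_F θ s hs
  obtain ⟨F', hFs', hFform'⟩ := sturmian_F θ s' hs'
  obtain ⟨c, hc⟩ := F_two_val θ F F' hFform hFform'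
  refine ⟨c - (F' 0 - F 0), by rcases hc 0 with h | h <;> omega, fun n => ?_⟩
  have hsum : (∑ i ∈ Finset.range n, (s' (i+1) - s (i+1))) = (F' n - F n) - (F' 0 - F 0) := by
    have h : ∀ i ∈ Finset.range n, s' (i+1) - s (i+1)
        = (F' (i+1) - F (i+1)) - (F' i - F i) := by
      intro i _; rw [hFs i, hFs' i]; ring
    rw [Finset.sum_congr rfl h, Finset.sum_range_sub (fun k => F' k - F k)]
  rw [hsum]
  rcases hc n with h | h <;> rcases hc 0 with h0 | h0 <;> omega

lemma sturmian_binary (θ : ℝ) (s : ℕ → ℤ) (hs : IsSturmian θ s) :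
    ∀ n, 1 ≤ n → s n = 0 ∨ s n = 1 := by
  obtain ⟨-, ⟨hθ0, hθ1⟩, ρ, h | h⟩ := hs <;> intro n hn
  · rw [h n hn, show ((n:ℝ)+1)*θ+ρ = ((n:ℝ)*θ+ρ)+θ from by ring]
    have h2 := floor_two_val ((n:ℝ)*θ+ρ) θ
    have hθ : ⌊θ⌋ = 0 := Int.floor_eq_zero_iff.mpr ⟨hθ0.le, hθ1⟩
    omega
  · rw [h n hn, show ((n:ℝ)+1)*θ+ρ = ((n:ℝ)*θ+ρ)+θ from by ring]
    have h2 := ceil_two_val ((n:ℝ)*θ+ρ) θ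
    have hθ : ⌈θ⌉ = 1 := by
      have h3 : ⌈θ⌉ ≤ 1 := Int.ceil_le.mpr (by norm_num; linarith)
      have h4 : 0 < ⌈θ⌉ := Int.ceil_pos.mpr hθ0
      omega
    omega

lemma abel_sum (r : ℝ) (d : ℕ → ℝ) (N : ℕ) :
    ∑ i ∈ Finset.range N, d i * r^(i+1) =
      (1-r) * (∑ k ∈ Finset.range N, (∑ i ∈ Finset.range k, d i) * r^k)
        + (∑ i ∈ Finset.range N, d i) * r^N := by
  induction N with
  | zero => simp
  | succ N ih =>
    rw [Finset.sum_range_succ (f := fun i => d i * r^(i+1)), ih,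
        Finset.sum_range_succ (f := fun k => (∑ i ∈ Finset.range k, d i) * r^k),
        Finset.sum_range_succ (f := d)]
    ring

lemma tsum_bounds (r : ℝ) (h0 : 0 < r) (h1 : r < 1) (d : ℕ → ℝ)
    (hd : Summable fun i => d i * r^(i+1))
    (hS0 : ∀ n, 0 ≤ ∑ i ∈ Finset.range n, d i)
    (hS1 : ∀ n, ∑ i ∈ Finset.range n, d i ≤ 1) :
    0 ≤ (∑' i, d i * r^(i+1)) ∧ (∑' i, d i * r^(i+1)) ≤ r ∧
      ∀ n₀ : ℕ, 1 ≤ ∑ i ∈ Finset.range n₀, d i →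
        (1-r) * r^n₀ ≤ ∑' i, d i * r^(i+1) := by
  have htend := hd.hasSum.tendsto_sum_nat
  have hr1 : (0:ℝ) ≤ 1 - r := by linarith
  have hterm : ∀ k : ℕ, 0 ≤ (∑ i ∈ Finset.range k, d i) * r^k :=
    fun k => mul_nonneg (hS0 k) (pow_nonneg h0.le k)
  have hsums : ∀ N, 0 ≤ ∑ k ∈ Finset.range N, (∑ i ∈ Finset.range k, d i) * r^k :=
    fun N => Finset.sum_nonneg (fun k _ => hterm k)
  have hPnonneg : ∀ N, 0 ≤ ∑ i ∈ Finset.range N, d i * r^(i+1) := by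
    intro N; rw [abel_sum]
    exact add_nonneg (mul_nonneg hr1 (hsums N)) (hterm N)
  have hPle : ∀ N, (∑ i ∈ Finset.range N, d i * r^(i+1)) ≤ r := by
    intro N
    cases N with
    | zero => simpa using h0.le
    | succ M =>
      rw [abel_sum]
      have hshift : (∑ k ∈ Finset.range (M+1), (∑ i ∈ Finset.range k, d i) * r^k)
          = ∑ k ∈ Finset.range M, (∑ i ∈ Finset.range (k+1), d i) * r^(k+1) := by
        rw [Finset.sum_range_succ' (fun k => (∑ i ∈ Finset.range k, d i) * r^k) M]; simp
      set A := ∑ k ∈ Finset.range M, r^k with hA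
      have hle : (∑ k ∈ Finset.range M, (∑ i ∈ Finset.range (k+1), d i) * r^(k+1)) ≤ r * A := by
        rw [hA, Finset.mul_sum]
        apply Finset.sum_le_sum
        intro k _
        have h3 : (∑ i ∈ Finset.range (k+1), d i) * r^(k+1) ≤ 1 * r^(k+1) :=
          mul_le_mul_of_nonneg_right (hS1 _) (pow_nonneg h0.le _)
        have h4 : (1:ℝ) * r^(k+1) = r * r^k := by ring
        linarith
      have hgeom : A * (r - 1) = r^M - 1 := geom_sum_mul r M
      have hEq : (1-r) * (r * A) = r - r^(M+1) := by linear_combination (-r) * hgeom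
      have hlast : (∑ i ∈ Finset.range (M+1), d i) * r^(M+1) ≤ r^(M+1) := by
        have := mul_le_mul_of_nonneg_right (hS1 (M+1)) (pow_nonneg h0.le (M+1)); linarith
      rw [hshift]
      have h5 : (1-r) * (∑ k ∈ Finset.range M, (∑ i ∈ Finset.range (k+1), d i) * r^(k+1))
          ≤ (1-r)*(r*A) := mul_le_mul_of_nonneg_left hle hr1
      linarith
  refine ⟨ge_of_tendsto' htend hPnonneg, le_of_tendsto' htend hPle, ?_⟩
  intro n₀ hn₀
  apply ge_of_tendsto htend
  filter_upwards [Filter.eventually_ge_atTop (n₀+1)] with N hN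
  rw [abel_sum]
  have hmem : n₀ ∈ Finset.range N := Finset.mem_range.mpr (by omega)
  have hsingle : (∑ i ∈ Finset.range n₀, d i) * r^n₀
      ≤ ∑ k ∈ Finset.range N, (∑ i ∈ Finset.range k, d i) * r^k :=
    Finset.single_le_sum (fun k _ => hterm k) hmem
  have h6 : r^n₀ ≤ (∑ i ∈ Finset.range n₀, d i) * r^n₀ := by
    have := mul_le_mul_of_nonneg_right hn₀ (pow_nonneg h0.le n₀); linarith
  have h7 : (1-r) * r^n₀ ≤ (1-r) * (∑ k ∈ Finset.range N, (∑ i ∈ Finset.range k, d i) * r^k) :=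
    mul_le_mul_of_nonneg_left (le_trans h6 hsingle) hr1
  linarith [hterm N]


lemma tval_summable (r : ℝ) (h0 : 0 < r) (h1 : r < 1) (s : ℕ → ℤ)
    (hb : ∀ n, 1 ≤ n → s n = 0 ∨ s n = 1) :
    Summable fun i : ℕ => (s (i+1) : ℝ) * r^(i+1) := by
  apply Summable.of_norm_bounded (g := fun i => r * r^i)
    ((summable_geometric_of_lt_one h0.le h1).mul_left r)
  intro i
  have habs : |(s (i+1) : ℝ)| ≤ 1 := by
    rcases hb (i+1) (by omega) with h | h <;> rw [h] <;> norm_num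
  have hcalc : ‖(s (i+1) : ℝ) * r^(i+1)‖ = |(s (i+1) : ℝ)| * r^(i+1) := by
    rw [Real.norm_eq_abs, abs_mul, abs_of_nonneg (pow_nonneg h0.le _)]
  rw [hcalc]
  have h2 := mul_le_mul_of_nonneg_right habs (pow_nonneg h0.le (i+1))
  have h3 : (1:ℝ) * r^(i+1) = r * r^i := by ring
  linarith

theorem stmt3 (r θ : ℝ) (h0 : 0 < r) (h1 : r < 1) (s s' : ℕ → ℤ)
    (hs : IsSturmian θ s) (hs' : IsSturmian θ s') :
    |tval r s' - tval r s| ≤ r ∧ (LexLt s s' → tval r s < tval r s') := by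
  have hbs := sturmian_binary θ s hs
  have hbs' := sturmian_binary θ s' hs'
  have hsum : Summable fun i : ℕ => (s (i+1) : ℝ) * r^(i+1) := tval_summable r h0 h1 s hbs
  have hsum' : Summable fun i : ℕ => (s' (i+1) : ℝ) * r^(i+1) := tval_summable r h0 h1 s' hbs'
  set d : ℕ → ℝ := fun i => ((s' (i+1) : ℝ) - (s (i+1) : ℝ)) with hd
  have hdsum : Summable fun i => d i * r^(i+1) := by
    have h2 := hsum'.sub hsum
    have h3 : (fun i : ℕ => d i * r^(i+1))
        = fun i : ℕ => (s' (i+1) : ℝ) * r^(i+1) - (s (i+1) : ℝ) * r^(i+1) := by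
      funext i; rw [hd]; ring
    rw [h3]; exact h2
  have hΔ : tval r s' - tval r s = ∑' i, d i * r^(i+1) := by
    rw [tval, tval, ← Summable.tsum_sub hsum' hsum]
    exact (tsum_congr fun i => by rw [hd]; ring).symm
  obtain ⟨e, he, hSval⟩ := sturmian_partial θ s s' hs hs'
  have hcast : ∀ n : ℕ, (∑ i ∈ Finset.range n, d i)
      = ((∑ i ∈ Finset.range n, (s' (i+1) - s (i+1)) : ℤ) : ℝ) := by
    intro n; rw [hd]; push_cast; rfl
  constructor
  · rcases he with rfl | rfl
    · have hS0 : ∀ n, 0 ≤ ∑ i ∈ Finset.range n, d i := by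
        intro n; rw [hcast n]
        rcases hSval n with h | h <;> rw [h] <;> norm_num
      have hS1 : ∀ n, (∑ i ∈ Finset.range n, d i) ≤ 1 := by
        intro n; rw [hcast n]
        rcases hSval n with h | h <;> rw [h] <;> norm_num
      obtain ⟨hb1, hb2, -⟩ := tsum_bounds r h0 h1 d hdsum hS0 hS1
      rw [hΔ, abs_le]; constructor <;> linarith
    · have hdsum' : Summable fun i => (-d i) * r^(i+1) := by
        have h2 : (fun i : ℕ => (-d i) * r^(i+1)) = fun i : ℕ => -(d i * r^(i+1)) := by
          funext i; ring
        rw [h2]; exact hdsum.neg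
      have hS0 : ∀ n, 0 ≤ ∑ i ∈ Finset.range n, (-d i) := by
        intro n; rw [Finset.sum_neg_distrib, hcast n]
        rcases hSval n with h | h <;> rw [h] <;> norm_num
      have hS1 : ∀ n, (∑ i ∈ Finset.range n, (-d i)) ≤ 1 := by
        intro n; rw [Finset.sum_neg_distrib, hcast n]
        rcases hSval n with h | h <;> rw [h] <;> norm_num
      obtain ⟨hb1, hb2, -⟩ := tsum_bounds r h0 h1 (fun i => -d i) hdsum' hS0 hS1
      have hneg : (∑' i, (-d i) * r^(i+1)) = -∑' i, d i * r^(i+1) := by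
        rw [← tsum_neg]; exact tsum_congr fun i => by ring
      rw [hneg] at hb1 hb2
      rw [hΔ, abs_le]; constructor <;> linarith
  · rintro ⟨n, hn1, hagree, hlt⟩
    obtain ⟨m, rfl⟩ : ∃ m, n = m + 1 := ⟨n - 1, by omega⟩
    have hzero : (∑ i ∈ Finset.range m, (s' (i+1) - s (i+1))) = 0 :=
      Finset.sum_eq_zero (fun i hi => by
        have hi' := Finset.mem_range.mp hi
        have := hagree (i+1) (by omega) (by omega)
        omega)
    have hSn : (∑ i ∈ Finset.range (m+1), (s' (i+1) - s (i+1))) = s' (m+1) - s (m+1) := by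
      rw [Finset.sum_range_succ, hzero, zero_add]
    have h1' : 1 ≤ ∑ i ∈ Finset.range (m+1), (s' (i+1) - s (i+1)) := by rw [hSn]; omega
    obtain rfl : e = 0 := by rcases hSval (m+1) with h | h <;> rcases he with rfl | rfl <;> omega
    have hS0 : ∀ k, 0 ≤ ∑ i ∈ Finset.range k, d i := by
      intro k; rw [hcast k]
      rcases hSval k with h | h <;> rw [h] <;> norm_num
    have hS1 : ∀ k, (∑ i ∈ Finset.range k, d i) ≤ 1 := by
      intro k; rw [hcast k]
      rcases hSval k with h | h <;> rw [h] <;> norm_num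
    obtain ⟨-, -, hstrict⟩ := tsum_bounds r h0 h1 d hdsum hS0 hS1
    have h8 : (1-r) * r^(m+1) ≤ ∑' i, d i * r^(i+1) := by
      apply hstrict
      rw [hcast]
      exact_mod_cast h1'
    have h9 : (0:ℝ) < (1-r) * r^(m+1) := mul_pos (by linarith) (pow_pos h0 _)
    linarith
end

section
/- Let s and s' be Sturmian words over {0,1} of the same slope. Then there is no finite binary word u such that 0u0 is a (contiguous) subword of s and 1u1 is a subword of s'. -/
lemma floor_window (x y : ℝ) : |((⌊x + y⌋ - ⌊x⌋ : ℤ) : ℝ) - y| < 1 := by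
  have h1 := Int.floor_le (x + y)
  have h2 := Int.lt_floor_add_one (x + y)
  have h3 := Int.floor_le x
  have h4 := Int.lt_floor_add_one x
  rw [abs_lt]; push_cast; constructor <;> linarith

lemma ceil_window (x y : ℝ) : |((⌈x + y⌉ - ⌈x⌉ : ℤ) : ℝ) - y| < 1 := by
  have h1 := Int.le_ceil (x + y)
  have h2 := Int.ceil_lt_add_one (x + y)
  have h3 := Int.le_ceil x
  have h4 := Int.ceil_lt_add_one x
  rw [abs_lt]; push_cast; constructor <;> linarith

lemma telescope (s : ℕ → ℤ) (F : ℕ → ℤ) (n : ℕ) (hn : 1 ≤ n)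
    (h : ∀ m, 1 ≤ m → s m = F (m+1) - F m) (L : ℕ) :
    ∑ i ∈ Finset.range L, s (n+i) = F (n+L) - F n := by
  induction L with
  | zero => simp
  | succ L ih =>
    rw [Finset.sum_range_succ, ih, h (n+L) (by omega),
      show n + (L+1) = (n+L)+1 from rfl]
    ring

lemma window_bound {θ : ℝ} {s : ℕ → ℤ} (hs : IsSturmian θ s) {n : ℕ} (hn : 1 ≤ n) (L : ℕ) :
    |((∑ i ∈ Finset.range L, s (n+i) : ℤ) : ℝ) - L * θ| < 1 := by
  obtain ⟨hirr, hmem, ρ, h | h⟩ := hs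
  · rw [telescope s (fun k => ⌊(k:ℝ)*θ+ρ⌋) n hn
      (fun m hm => by rw [h m hm]; push_cast; ring_nf) L]
    have e : ((n+L:ℕ):ℝ)*θ+ρ = ((n:ℝ)*θ+ρ) + (L:ℝ)*θ := by push_cast; ring
    simp only [e]
    exact floor_window _ _
  · rw [telescope s (fun k => ⌈(k:ℝ)*θ+ρ⌉) n hn
      (fun m hm => by rw [h m hm]; push_cast; ring_nf) L]
    have e : ((n+L:ℕ):ℝ)*θ+ρ = ((n:ℝ)*θ+ρ) + (L:ℝ)*θ := by push_cast; ring
    simp only [e]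
    exact ceil_window _ _

lemma sum_getD (w : List ℤ) : ∑ i ∈ Finset.range w.length, w.getD i 0 = w.sum := by
  induction w with
  | nil => simp
  | cons a t ih =>
    rw [List.length_cons, Finset.sum_range_succ']
    simp only [List.getD_cons_succ, List.getD_cons_zero, List.sum_cons, ih]
    ring

lemma subword_sum {w : List ℤ} {s : ℕ → ℤ} {n : ℕ}
    (h : ∀ i, i < w.length → s (n + i) = w.getD i 0) :
    ∑ i ∈ Finset.range w.length, s (n+i) = w.sum := by
  rw [← sum_getD]
  exact Finset.sum_congr rfl fun i hi => h i (Finset.mem_range.mp hi)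

theorem stmt4 (θ : ℝ) (s s' : ℕ → ℤ) (hs : IsSturmian θ s) (hs' : IsSturmian θ s') :
    ¬ ∃ u : List ℤ, Subword (0 :: (u ++ [0])) s ∧ Subword (1 :: (u ++ [1])) s' := by
  rintro ⟨u, ⟨n, hn, h1⟩, ⟨m, hm, h2⟩⟩
  have l1 : ((0:ℤ) :: (u ++ [0])).length = u.length + 2 := by simp
  have l2 : ((1:ℤ) :: (u ++ [1])).length = u.length + 2 := by simp
  have σ1 : ∑ i ∈ Finset.range (u.length + 2), s (n+i) = u.sum := by
    rw [← l1, subword_sum h1]; simp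
  have σ2 : ∑ i ∈ Finset.range (u.length + 2), s' (m+i) = u.sum + 2 := by
    rw [← l2, subword_sum h2]; simp; ring
  have b1 := window_bound hs hn (u.length + 2)
  have b2 := window_bound hs' hm (u.length + 2)
  rw [σ1, abs_lt] at b1
  rw [σ2, abs_lt] at b2
  push_cast at b1 b2
  linarith [b1.1, b1.2, b2.1, b2.2]
end

section
/- Let w be an aperiodic binary sequence that belongs to the class S, i.e., w = a^l s where a ∈ {0,1}, l ≥ 0, and s is a Sturmian word. Then there does not exist a finite binary word u such that both 01u1 and 10u0 are subwords of w. -/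
lemma sum_getD_eq (L : List ℤ) :
    ∑ j ∈ Finset.range L.length, L.getD j 0 = L.sum := by
  induction L with
  | nil => simp
  | cons a t ih =>
    rw [List.length_cons, Finset.sum_range_succ']
    simp only [List.getD_cons_succ, ih, List.getD_cons_zero, List.sum_cons]
    ring

lemma sum_tel (f s : ℕ → ℤ) (p m : ℕ) (hp : 1 ≤ p)
    (hs : ∀ k, 1 ≤ k → s k = f (k+1) - f k) :
    ∑ i ∈ Finset.range m, s (p+i) = f (p+m) - f p := by
  have h : ∀ i ∈ Finset.range m, s (p+i) = f (p+(i+1)) - f (p+i) := by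
    intro i _; exact hs _ (by omega)
  rw [Finset.sum_congr rfl h, Finset.sum_range_sub (fun j => f (p+j)) m]
  norm_num

lemma floor_bound (x c : ℝ) : ⌊c⌋ ≤ ⌊x+c⌋ - ⌊x⌋ ∧ ⌊x+c⌋ - ⌊x⌋ ≤ ⌊c⌋+1 := by
  constructor
  · have h1 : (↑(⌊x⌋ + ⌊c⌋) : ℝ) ≤ x + c := by
      push_cast; linarith [Int.floor_le x, Int.floor_le c]
    have := Int.le_floor.2 h1
    omega
  · have h2 : x + c < ↑(⌊x⌋ + ⌊c⌋ + 2) := by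
      push_cast; linarith [Int.lt_floor_add_one x, Int.lt_floor_add_one c]
    have := Int.floor_lt.2 h2
    omega

lemma ceil_bound (x c : ℝ) : ⌈c⌉ - 1 ≤ ⌈x+c⌉ - ⌈x⌉ ∧ ⌈x+c⌉ - ⌈x⌉ ≤ ⌈c⌉ := by
  constructor
  · have h1 : (↑(⌈x⌉ + ⌈c⌉ - 2) : ℝ) < x + c := by
      push_cast; linarith [Int.ceil_lt_add_one x, Int.ceil_lt_add_one c]
    have := Int.lt_ceil.2 h1
    omega
  · have h2 : x + c ≤ ↑(⌈x⌉ + ⌈c⌉) := by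
      push_cast; linarith [Int.le_ceil x, Int.le_ceil c]
    have := Int.ceil_le.2 h2
    omega

lemma extract (a c0 c1 : ℤ) (hne : c0 ≠ a ∨ c1 ≠ a) (l : ℕ) (s w : ℕ → ℤ)
    (hEq : EqW w (Prepend a l s)) (L : List ℤ)
    (hocc : Subword (c0 :: c1 :: L) w) :
    ∃ q, 1 ≤ q ∧ ∀ j, j < L.length + 1 → s (q + j) = (c1 :: L).getD j 0 := by
  obtain ⟨n, hn, hsub⟩ := hocc
  have h0 : w n = c0 := by simpa using hsub 0 (by simp)
  have h1 : w (n+1) = c1 := by simpa using hsub 1 (by simp)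
  have hl : l < n + 1 := by
    by_contra h
    push_neg at h
    rcases hne with h' | h'
    · apply h'; rw [← h0, hEq n hn]; unfold Prepend; rw [if_pos (by omega)]
    · apply h'; rw [← h1, hEq (n+1) (by omega)]; unfold Prepend; rw [if_pos h]
  refine ⟨n+1-l, by omega, fun j hj => ?_⟩
  have hw : w (n + (j+1)) = (c1 :: L).getD j 0 := by
    simpa using hsub (j+1) (by simp; omega)
  rw [hEq (n+(j+1)) (by omega)] at hw
  unfold Prepend at hw
  rw [if_neg (by omega)] at hw
  have he : n + (j+1) - l = n + 1 - l + j := by omega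
  rwa [he] at hw

theorem stmt7 (w : ℕ → ℤ) (hap : Aperiodic w) (hw : MemS w) :
    ¬ ∃ u : List ℤ,
        Subword (0 :: 1 :: (u ++ [1])) w ∧ Subword (1 :: 0 :: (u ++ [0])) w := by
  rintro ⟨u, h01, h10⟩
  obtain ⟨a, l, s, θ, ha, ⟨hirr, hθ, ρ, hcase⟩, hEq⟩ := hw
  have ha' : (0:ℤ) ≠ a ∨ (1:ℤ) ≠ a := by rcases ha with h | h <;> simp [h]
  obtain ⟨q1, hq1, hS1⟩ := extract a 0 1 ha' l s w hEq (u ++ [1]) h01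
  obtain ⟨q0, hq0, hS0⟩ := extract a 1 0 (Or.symm ha') l s w hEq (u ++ [0]) h10
  set m := u.length + 2 with hm
  have len1 : (u ++ [(1:ℤ)]).length + 1 = m := by simp [hm]
  have len0 : (u ++ [(0:ℤ)]).length + 1 = m := by simp [hm]
  have e1 : ∑ j ∈ Finset.range m, s (q1+j) = u.sum + 2 := by
    have : ∑ j ∈ Finset.range m, s (q1+j)
        = ∑ j ∈ Finset.range m, ((1 :: (u ++ [(1:ℤ)])).getD j 0) := by
      refine Finset.sum_congr rfl (fun j hj => ?_)
      exact hS1 j (by simp at hj; omega)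
    rw [this]
    have hlen : m = (1 :: (u ++ [(1:ℤ)])).length := by simp [hm]
    rw [hlen, sum_getD_eq]
    simp; ring
  have e0 : ∑ j ∈ Finset.range m, s (q0+j) = u.sum := by
    have : ∑ j ∈ Finset.range m, s (q0+j)
        = ∑ j ∈ Finset.range m, ((0 :: (u ++ [(0:ℤ)])).getD j 0) := by
      refine Finset.sum_congr rfl (fun j hj => ?_)
      exact hS0 j (by simp at hj; omega)
    rw [this]
    have hlen : m = (0 :: (u ++ [(0:ℤ)])).length := by simp [hm]
    rw [hlen, sum_getD_eq]
    simp
  rcases hcase with hfl | hcl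
  · set f : ℕ → ℤ := fun k => ⌊(k:ℝ)*θ + ρ⌋ with hf
    have hs : ∀ k, 1 ≤ k → s k = f (k+1) - f k := by
      intro k hk
      rw [hfl k hk, hf]
      congr 2 <;> push_cast <;> ring
    have t1 := sum_tel f s q1 m hq1 hs
    have t0 := sum_tel f s q0 m hq0 hs
    have b1 := floor_bound ((q1:ℝ)*θ + ρ) ((m:ℝ)*θ)
    have b0 := floor_bound ((q0:ℝ)*θ + ρ) ((m:ℝ)*θ)
    have c1 : f (q1+m) = ⌊((q1:ℝ)*θ + ρ) + (m:ℝ)*θ⌋ := by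
      rw [hf]; congr 1; push_cast; ring
    have d1 : f q1 = ⌊(q1:ℝ)*θ + ρ⌋ := by rw [hf]
    have c0 : f (q0+m) = ⌊((q0:ℝ)*θ + ρ) + (m:ℝ)*θ⌋ := by
      rw [hf]; congr 1; push_cast; ring
    have d0 : f q0 = ⌊(q0:ℝ)*θ + ρ⌋ := by rw [hf]
    rw [e1, c1, d1] at t1
    rw [e0, c0, d0] at t0
    omega
  · set f : ℕ → ℤ := fun k => ⌈(k:ℝ)*θ + ρ⌉ with hf
    have hs : ∀ k, 1 ≤ k → s k = f (k+1) - f k := by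
      intro k hk
      rw [hcl k hk, hf]
      congr 2 <;> push_cast <;> ring
    have t1 := sum_tel f s q1 m hq1 hs
    have t0 := sum_tel f s q0 m hq0 hs
    have b1 := ceil_bound ((q1:ℝ)*θ + ρ) ((m:ℝ)*θ)
    have b0 := ceil_bound ((q0:ℝ)*θ + ρ) ((m:ℝ)*θ)
    have c1 : f (q1+m) = ⌈((q1:ℝ)*θ + ρ) + (m:ℝ)*θ⌉ := by
      rw [hf]; congr 1; push_cast; ring
    have d1 : f q1 = ⌈(q1:ℝ)*θ + ρ⌉ := by rw [hf]
    have c0 : f (q0+m) = ⌈((q0:ℝ)*θ + ρ) + (m:ℝ)*θ⌉ := by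
      rw [hf]; congr 1; push_cast; ring
    have d0 : f q0 = ⌈(q0:ℝ)*θ + ρ⌉ := by rw [hf]
    rw [e1, c1, d1] at t1
    rw [e0, c0, d0] at t0
    omega
end

section
/- Let w be an aperiodic binary sequence such that there is no finite binary word u with both 01u1 and 10u0 occurring as subwords of w. Then w ∈ S, i.e., w = 0^l s or w = 1^l s for some l ≥ 0 and some Sturmian word s. -/
namespace Stmt8Aux

/-- Partial sums: S s n = ∑_{i=1}^n s i. -/
def S (s : ℕ → ℤ) (n : ℕ) : ℤ := ∑ i ∈ Finset.Icc 1 n, s i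

/-- Window sum: number of ones in positions n+1..n+k (for binary s). -/
def H (s : ℕ → ℤ) (k n : ℕ) : ℤ := S s (n+k) - S s n

lemma S_zero (s : ℕ → ℤ) : S s 0 = 0 := by simp [S]

lemma S_succ (s : ℕ → ℤ) (n : ℕ) : S s (n+1) = S s n + s (n+1) := by
  unfold S
  rw [Finset.sum_Icc_succ_top (by omega : 1 ≤ n+1)]

lemma H_zero (s : ℕ → ℤ) (n : ℕ) : H s 0 n = 0 := by simp [H]

lemma H_one (s : ℕ → ℤ) (n : ℕ) : H s 1 n = s (n+1) := by
  unfold H; rw [S_succ]; ring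

lemma H_back (s : ℕ → ℤ) (k n : ℕ) : H s (k+1) n = H s k n + s (n+k+1) := by
  unfold H; rw [show n + (k+1) = (n+k)+1 by ring, S_succ]; ring

lemma H_split (s : ℕ → ℤ) (k j n : ℕ) : H s (k+j) n = H s k n + H s j (n+k) := by
  unfold H; rw [show n + (k+j) = (n+k)+j by ring]; ring

lemma H_front (s : ℕ → ℤ) (k n : ℕ) : H s (k+1) n = s (n+1) + H s k (n+1) := by
  rw [show k+1 = 1+k by ring, H_split, H_one]

lemma H_nonneg {s : ℕ → ℤ} (hb : IsBinary s) (k n : ℕ) : 0 ≤ H s k n := by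
  induction k with
  | zero => simp [H_zero]
  | succ k ih => rw [H_back]; rcases hb (n+k+1) with h | h <;> omega

lemma H_le {s : ℕ → ℤ} (hb : IsBinary s) (k n : ℕ) : H s k n ≤ k := by
  induction k with
  | zero => simp [H_zero]
  | succ k ih =>
    rw [H_back]; rcases hb (n+k+1) with h | h <;> push_cast <;> omega

lemma H_congr {s : ℕ → ℤ} (k n m : ℕ)
    (h : ∀ i, 1 ≤ i → i ≤ k → s (n+i) = s (m+i)) : H s k n = H s k m := by
  induction k with
  | zero => simp [H_zero]
  | succ k ih =>
    rw [H_back, H_back, show n+k+1 = n+(k+1) by ring, show m+k+1 = m+(k+1) by ring,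
      h (k+1) (by omega) le_rfl, ih (fun i h1 h2 => h i h1 (by omega))]


/-- Structure lemma for a minimal unbalanced pair. -/
lemma SL {s : ℕ → ℤ} (hb : IsBinary s) {k n m : ℕ} (hk2 : 2 ≤ k)
    (hmin : ∀ j, j < k → ∀ n' m', H s j n' ≤ H s j m' + 1)
    (hnm : H s k n = H s k m + 2) :
    s (n+1) = 1 ∧ s (m+1) = 0 ∧ s (n+k) = 1 ∧ s (m+k) = 0 ∧
      (∀ i, 2 ≤ i → i ≤ k - 1 → s (n+i) = s (m+i)) := by
  obtain ⟨K, rfl⟩ : ∃ K, k = K + 2 := ⟨k - 2, by omega⟩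
  -- first letters
  have hfn := H_front s (K+1) n
  have hfm := H_front s (K+1) m
  have hbn := H_back s (K+1) n
  have hbm := H_back s (K+1) m
  rw [show K+1+1 = K+2 by omega] at hfn hfm hbn hbm
  rw [show n+(K+1)+1 = n+(K+2) by omega] at hbn
  rw [show m+(K+1)+1 = m+(K+2) by omega] at hbm
  have hminK1 := hmin (K+1) (by omega) (n+1) (m+1)
  have h1n : s (n+1) = 1 ∧ s (m+1) = 0 := by
    rcases hb (n+1) with h | h <;> rcases hb (m+1) with h' | h' <;> omega
  have hminK1' := hmin (K+1) (by omega) n m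
  have h2n : s (n+(K+2)) = 1 ∧ s (m+(K+2)) = 0 := by
    rcases hb (n+(K+2)) with h | h <;> rcases hb (m+(K+2)) with h' | h' <;> omega
  refine ⟨h1n.1, h1n.2, h2n.1, h2n.2, ?_⟩
  by_contra hbad
  push_neg at hbad
  obtain ⟨i0, hi02, hi0K, hi0ne⟩ := hbad
  have hex : ∃ i, 2 ≤ i ∧ i ≤ K + 2 - 1 ∧ s (n+i) ≠ s (m+i) := ⟨i0, hi02, hi0K, hi0ne⟩
  classical
  obtain ⟨hj2, hjK, hjne⟩ := Nat.find_spec hex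
  have hjmin : ∀ i, 2 ≤ i → i < Nat.find hex → s (n+i) = s (m+i) := by
    intro i h2 hlt
    by_contra hne
    exact Nat.find_min hex hlt ⟨h2, by omega, hne⟩
  obtain ⟨J, hJ⟩ : ∃ J, Nat.find hex = J + 2 := ⟨Nat.find hex - 2, by omega⟩
  rw [hJ] at hjK hjne
  simp only [hJ] at hjmin
  have hmid : H s J (n+1) = H s J (m+1) := by
    apply H_congr
    intro i h1 h2
    rw [show n+1+i = n+(i+1) by ring, show m+1+i = m+(i+1) by ring]
    exact hjmin (i+1) (by omega) (by omega)
  have hdn : H s (J+2) n = s (n+1) + H s J (n+1) + s (n+(J+2)) := by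
    rw [H_front, H_back, show n+1+J+1 = n+(J+2) by omega]; ring
  have hdm : H s (J+2) m = s (m+1) + H s J (m+1) + s (m+(J+2)) := by
    rw [H_front, H_back, show m+1+J+1 = m+(J+2) by omega]; ring
  rw [show J+1+1 = J+2 by omega] at hdn hdm
  rcases hb (n+(J+2)) with hnj | hnj <;> rcases hb (m+(J+2)) with hmj | hmj
  · exact hjne (by omega)
  · -- suffix windows of length K+2-(J+2) differ by 2
    have hsplitn := H_split s (J+2) (K - J) n
    have hsplitm := H_split s (J+2) (K - J) m
    rw [show J+2+(K-J) = K+2 by omega] at hsplitn hsplitm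
    have hminsuf := hmin (K - J) (by omega) (n+(J+2)) (m+(J+2))
    omega
  · have hminj := hmin (J+2) (by omega) n m
    omega
  · exact hjne (by omega)

/-! ### Step 2: balanced + aperiodic + binary implies Sturmian -/

def Bal (s : ℕ → ℤ) : Prop := ∀ k n m, H s k n ≤ H s k m + 1

def Aperiodic' (s : ℕ → ℤ) : Prop :=
  ¬ ∃ k, 1 ≤ k ∧ ∃ N, 1 ≤ N ∧ ∀ n, N ≤ n → s n = s (n + k)

open Classical in
/-- The maximal window sum of length `k`. -/
noncomputable def q (s : ℕ → ℤ) (k : ℕ) : ℤ :=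
  if ∃ n, H s k n = H s k 0 + 1 then H s k 0 + 1 else H s k 0

variable {s : ℕ → ℤ}

lemma q_ge (hbal : Bal s) (k n : ℕ) : H s k n ≤ q s k := by
  classical
  unfold q
  by_cases hch : ∃ n', H s k n' = H s k 0 + 1
  · rw [if_pos hch]; exact hbal k n 0
  · rw [if_neg hch]
    by_contra hgt
    push_neg at hgt
    have := hbal k n 0
    exact hch ⟨n, by omega⟩

lemma q_attained (k : ℕ) : ∃ n, H s k n = q s k := by
  classical
  unfold q
  by_cases hch : ∃ n', H s k n' = H s k 0 + 1
  · rw [if_pos hch]; exact hch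
  · rw [if_neg hch]; exact ⟨0, rfl⟩

lemma q_lb (hbal : Bal s) (k n : ℕ) : q s k - 1 ≤ H s k n := by
  obtain ⟨n0, hn0⟩ := q_attained (s := s) k
  have := hbal k n0 n
  omega

lemma q_nonneg (hb : IsBinary s) (k : ℕ) : 0 ≤ q s k := by
  obtain ⟨n0, hn0⟩ := q_attained (s := s) k
  have := H_nonneg hb k n0
  omega

lemma q_le_k (hb : IsBinary s) (k : ℕ) : q s k ≤ k := by
  obtain ⟨n0, hn0⟩ := q_attained (s := s) k
  have := H_le hb k n0
  omega

lemma q_subadd (hbal : Bal s) (k j : ℕ) : q s (k+j) ≤ q s k + q s j := by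
  obtain ⟨n0, hn0⟩ := q_attained (s := s) (k+j)
  have hs := H_split s k j n0
  have h1 := q_ge hbal k n0
  have h2 := q_ge hbal j (n0+k)
  omega

lemma q_superadd (hbal : Bal s) (k j : ℕ) : q s k + q s j - 1 ≤ q s (k+j) := by
  obtain ⟨n0, hn0⟩ := q_attained (s := s) k
  have hs := H_split s k j n0
  have h1 := q_ge hbal (k+j) n0
  have h2 := q_lb hbal j (n0+k)
  omega

lemma q_zero : q s 0 = 0 := by
  classical
  unfold q
  simp [H_zero]

lemma q_mul_le (hbal : Bal s) (j k : ℕ) : q s (j*k) ≤ j * q s k := by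
  induction j with
  | zero => norm_num [Nat.zero_mul, q_zero]
  | succ j ih =>
    have h1 := q_subadd hbal (j*k) k
    rw [show (j+1)*k = j*k + k by ring]
    push_cast
    push_cast at ih
    linarith

lemma q_mul_ge (hbal : Bal s) (j k : ℕ) (hj : 1 ≤ j) :
    j * q s k - (j - 1) ≤ q s (j*k) := by
  induction j with
  | zero => omega
  | succ j ih =>
    rcases Nat.eq_zero_or_pos j with rfl | hjp
    · simp
    · have h1 := q_superadd hbal (j*k) k
      have h2 := ih hjp
      rw [show (j+1)*k = j*k + k by ring]
      push_cast
      push_cast at h2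
      linarith

/-- The slope. -/
noncomputable def th (s : ℕ → ℤ) : ℝ := ⨅ k : ℕ, (q s (k+1) : ℝ) / (k+1)

lemma th_bdd (hb : IsBinary s) :
    BddBelow (Set.range fun k : ℕ => (q s (k+1) : ℝ) / (k+1)) := by
  refine ⟨0, ?_⟩
  rintro x ⟨k, rfl⟩
  have := q_nonneg hb (k+1)
  positivity

lemma th_le (hb : IsBinary s) (k : ℕ) : ((k:ℝ)+1) * th s ≤ (q s (k+1) : ℝ) := by
  have h1 : th s ≤ (q s (k+1) : ℝ) / (k+1) := ciInf_le (th_bdd hb) k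
  have hkpos : (0:ℝ) < (k:ℝ)+1 := by positivity
  calc ((k:ℝ)+1) * th s ≤ ((k:ℝ)+1) * ((q s (k+1) : ℝ) / (k+1)) := by
        exact mul_le_mul_of_nonneg_left h1 (le_of_lt hkpos)
    _ = (q s (k+1) : ℝ) := by field_simp

lemma th_ge (hbal : Bal s) (hb : IsBinary s) (k : ℕ) :
    (q s (k+1) : ℝ) - 1 ≤ ((k:ℝ)+1) * th s := by
  have h1 : ((q s (k+1) : ℝ) - 1)/((k:ℝ)+1) ≤ th s := by
    apply le_ciInf
    intro j
    rw [div_le_div_iff₀ (by positivity) (by positivity)]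
    have hge := q_mul_ge hbal (j+1) (k+1) (by omega)
    have hle := q_mul_le hbal (k+1) (j+1)
    rw [show (j+1)*(k+1) = (k+1)*(j+1) by ring] at hge
    have hint : ((j:ℤ)+1) * (q s (k+1) - 1) ≤ ((k:ℤ)+1) * q s (j+1) := by
      push_cast at hge hle ⊢
      nlinarith [hge, hle]
    have hR : ((j:ℝ)+1) * ((q s (k+1) : ℝ) - 1) ≤ ((k:ℝ)+1) * (q s (j+1) : ℝ) := by
      exact_mod_cast hint
    nlinarith [hR]
  have hkpos : (0:ℝ) < (k:ℝ)+1 := by positivity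
  calc (q s (k+1) : ℝ) - 1 = (((q s (k+1) : ℝ) - 1)/((k:ℝ)+1)) * ((k:ℝ)+1) := by field_simp
    _ ≤ th s * ((k:ℝ)+1) := by exact mul_le_mul_of_nonneg_right h1 (le_of_lt hkpos)
    _ = ((k:ℝ)+1) * th s := by ring


lemma th_le' (hb : IsBinary s) (k : ℕ) (hk : 1 ≤ k) : (k:ℝ) * th s ≤ (q s k : ℝ) := by
  obtain ⟨k', rfl⟩ : ∃ k', k = k' + 1 := ⟨k-1, by omega⟩
  have := th_le (s := s) hb k'
  push_cast
  push_cast at this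
  linarith

lemma th_ge' (hbal : Bal s) (hb : IsBinary s) (k : ℕ) (hk : 1 ≤ k) :
    (q s k : ℝ) - 1 ≤ (k:ℝ) * th s := by
  obtain ⟨k', rfl⟩ : ∃ k', k = k' + 1 := ⟨k-1, by omega⟩
  have := th_ge (s := s) hbal hb k'
  push_cast
  push_cast at this
  linarith

lemma H_mul_le (hbal : Bal s) (j k n : ℕ) : H s (j*k) n ≤ j * q s k := by
  induction j with
  | zero => simp [Nat.zero_mul, H_zero]
  | succ j ih =>
    have hs := H_split s (j*k) k n
    have hq := q_ge hbal k (n + j*k)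
    rw [show (j+1)*k = j*k+k by ring]
    push_cast
    push_cast at ih
    linarith

lemma H_mul_ge (hbal : Bal s) (j k n : ℕ) : (j:ℤ) * (q s k - 1) ≤ H s (j*k) n := by
  induction j with
  | zero => simp [Nat.zero_mul, H_zero]
  | succ j ih =>
    have hs := H_split s (j*k) k n
    have hq := q_lb hbal k (n + j*k)
    rw [show (j+1)*k = j*k+k by ring]
    push_cast
    push_cast at ih
    linarith

lemma not_aperiodic_of_window_const (d N : ℕ) (hd : 1 ≤ d) (v : ℤ)
    (hc : ∀ n, N ≤ n → H s d n = v) : ¬ Aperiodic' s := by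
  intro hap
  apply hap
  refine ⟨d, hd, N+1, by omega, ?_⟩
  intro n hn
  obtain ⟨n', rfl⟩ : ∃ n', n = n' + 1 := ⟨n-1, by omega⟩
  have h1 := H_front s d n'
  have h2 := H_back s d n'
  have e1 := hc n' (by omega)
  have e2 := hc (n'+1) (by omega)
  rw [show n'+d+1 = n'+1+d by ring] at h2
  omega

lemma bad_finite (d : ℕ) (hd : 1 ≤ d) (v : ℤ)
    (hpair : ∀ a j : ℕ, H s d a = v → H s d (a + (j+1)*d) = v → False) :
    ∃ N, ∀ n, N ≤ n → H s d n ≠ v := by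
  have hfin : {n | H s d n = v}.Finite := by
    apply Set.Finite.of_finite_image (f := fun n => n % d)
    · apply (Set.finite_Icc 0 d).subset
      rintro y ⟨n, _, rfl⟩
      exact Set.mem_Icc.mpr ⟨Nat.zero_le _, le_of_lt (Nat.mod_lt _ hd)⟩
    · intro a ha b hb hab
      simp only [Set.mem_setOf_eq] at ha hb
      rcases lt_trichotomy a b with hlt | heq | hgt
      · exfalso
        have hdvd : d ∣ b - a := (Nat.modEq_iff_dvd' (le_of_lt hlt)).mp hab
        obtain ⟨t, ht⟩ := hdvd
        have hb' : b = d * t + a := (Nat.sub_eq_iff_eq_add (le_of_lt hlt)).mp ht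
        have ht1 : 1 ≤ t := by
          rcases Nat.eq_zero_or_pos t with rfl | h
          · omega
          · exact h
        obtain ⟨t', rfl⟩ : ∃ t', t = t' + 1 := ⟨t-1, by omega⟩
        have heq2 : a + (t'+1)*d = b := by rw [hb']; ring
        exact hpair a t' ha (by rw [heq2]; exact hb)
      · exact heq
      · exfalso
        have hdvd : d ∣ a - b := (Nat.modEq_iff_dvd' (le_of_lt hgt)).mp hab.symm
        obtain ⟨t, ht⟩ := hdvd
        have hb' : a = d * t + b := (Nat.sub_eq_iff_eq_add (le_of_lt hgt)).mp ht
        have ht1 : 1 ≤ t := by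
          rcases Nat.eq_zero_or_pos t with rfl | h
          · omega
          · exact h
        obtain ⟨t', rfl⟩ : ∃ t', t = t' + 1 := ⟨t-1, by omega⟩
        have heq2 : b + (t'+1)*d = a := by rw [hb']; ring
        exact hpair b t' hb (by rw [heq2]; exact ha)
  obtain ⟨N, hN⟩ := hfin.bddAbove
  refine ⟨N+1, fun n hn hv => ?_⟩
  have := hN (Set.mem_setOf_eq ▸ hv : n ∈ {n | H s d n = v})
  omega

lemma th_irrational (hb : IsBinary s) (hbal : Bal s) (hap : Aperiodic' s) :
    Irrational (th s) := by
  rintro ⟨x, hx⟩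
  set d := x.den with hdden
  set c := x.num with hcnum
  have hd1 : 1 ≤ d := x.den_pos
  have hdc : (d:ℝ) * th s = (c:ℝ) := by
    rw [← hx, Rat.cast_def]
    have : (d:ℝ) ≠ 0 := by positivity
    field_simp
    rfl
  have hup : (d:ℝ) * th s ≤ (q s d : ℝ) := th_le' hb d hd1
  have hlow : (q s d : ℝ) - 1 ≤ (d:ℝ) * th s := th_ge' hbal hb d hd1
  have hcint1 : (q s d : ℝ) - 1 ≤ (c:ℝ) := by linarith
  have hcint2 : (c:ℝ) ≤ (q s d : ℝ) := by linarith
  have hc1 : q s d - 1 ≤ c := by exact_mod_cast hcint1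
  have hc2 : c ≤ q s d := by exact_mod_cast hcint2
  -- key: the big-window computation, for both possible bad values
  have hKbound : ∀ a j : ℕ,
      H s ((j+2)*d) a = H s d a + H s (j*d) (a+d) + H s d (a + (j+1)*d) := by
    intro a j
    have h1 := H_split s d ((j+1)*d) a
    have h2 := H_split s (j*d) d (a+d)
    rw [show d + (j+1)*d = (j+2)*d by ring] at h1
    rw [show (j+1)*d = j*d + d by ring] at h1
    rw [show a+d+j*d = a+(j+1)*d by ring] at h2
    rw [h1, h2]; ring
  have hKth : ∀ j : ℕ, (((j:ℝ)+2) * (c:ℝ)) = (((j+2)*d : ℕ):ℝ) * th s := by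
    intro j
    push_cast
    rw [← hdc]
    ring
  rcases (by omega : c = q s d ∨ c = q s d - 1) with hc | hc
  · -- bad value is q s d - 1
    have hpair : ∀ a j : ℕ, H s d a = q s d - 1 → H s d (a + (j+1)*d) = q s d - 1 → False := by
      intro a j ha hb2
      have hK := hKbound a j
      have hmid := H_mul_le hbal j d (a+d)
      have hlb := q_lb hbal ((j+2)*d) a
      -- q ((j+2)d) ≥ (j+2) c
      have hth : (((j+2)*d:ℕ):ℝ) * th s ≤ (q s ((j+2)*d) : ℝ) :=
        th_le' hb _ (Nat.mul_pos (by omega) hd1)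
      rw [← hKth j] at hth
      have hqK : ((j:ℤ)+2) * c ≤ q s ((j+2)*d) := by exact_mod_cast hth
      rw [hc] at hqK
      have hj0 : (0:ℤ) ≤ (j:ℤ) := Int.ofNat_nonneg j
      nlinarith [hK, hmid, hlb, hqK, ha, hb2]
    obtain ⟨N, hN⟩ := bad_finite d hd1 (q s d - 1) hpair
    apply not_aperiodic_of_window_const d N hd1 (q s d) (fun n hn => ?_) hap
    have h1 := q_ge hbal d n
    have h2 := q_lb hbal d n
    have h3 := hN n hn
    omega
  · -- bad value is q s d
    have hpair : ∀ a j : ℕ, H s d a = q s d → H s d (a + (j+1)*d) = q s d → False := by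
      intro a j ha hb2
      have hK := hKbound a j
      have hmid := H_mul_ge hbal j d (a+d)
      have hub := q_ge hbal ((j+2)*d) a
      have hth : (q s ((j+2)*d) : ℝ) - 1 ≤ (((j+2)*d:ℕ):ℝ) * th s :=
        th_ge' hbal hb _ (Nat.mul_pos (by omega) hd1)
      rw [← hKth j] at hth
      have hqK : q s ((j+2)*d) ≤ ((j:ℤ)+2) * c + 1 := by
        have : (q s ((j+2)*d) : ℝ) ≤ ((j:ℝ)+2) * (c:ℝ) + 1 := by linarith
        exact_mod_cast this
      rw [hc] at hqK
      have hj0 : (0:ℤ) ≤ (j:ℤ) := Int.ofNat_nonneg j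
      nlinarith [hK, hmid, hub, hqK, ha, hb2]
    obtain ⟨N, hN⟩ := bad_finite d hd1 (q s d) hpair
    apply not_aperiodic_of_window_const d N hd1 (q s d - 1) (fun n hn => ?_) hap
    have h1 := q_ge hbal d n
    have h2 := q_lb hbal d n
    have h3 := hN n hn
    omega


noncomputable def aseq (s : ℕ → ℤ) (θ : ℝ) (n : ℕ) : ℝ := ((S s n : ℤ) : ℝ) - (n:ℝ)*θ

lemma aseq_zero (s : ℕ → ℤ) (θ : ℝ) : aseq s θ 0 = 0 := by
  simp [aseq, S_zero]

lemma aseq_diff (s : ℕ → ℤ) (θ : ℝ) (m k : ℕ) :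
    aseq s θ (m+k) - aseq s θ m = ((H s k m : ℤ) : ℝ) - (k:ℝ)*θ := by
  unfold aseq H
  push_cast
  ring

lemma sturmian_of_balanced (hb : IsBinary s) (hap : Aperiodic' s) (hbal : Bal s) :
    ∃ θ : ℝ, IsSturmian θ s := by
  set θ := th s with hθdef
  have irr : Irrational θ := th_irrational hb hbal hap
  have hnoint : ∀ k : ℕ, 1 ≤ k → ∀ z : ℤ, (k:ℝ) * θ ≠ (z:ℝ) := by
    intro k hk z heq
    apply irr
    refine ⟨(z:ℚ)/(k:ℚ), ?_⟩
    have hkR : (k:ℝ) ≠ 0 := by positivity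
    push_cast
    rw [div_eq_iff hkR]
    linarith [heq]
  have hθ0 : 0 ≤ θ := by
    apply le_ciInf
    intro k
    have := q_nonneg hb (k+1)
    have : (0:ℝ) ≤ (q s (k+1) : ℝ) := by exact_mod_cast this
    positivity
  have hθ1 : θ ≤ 1 := by
    have h1 : θ ≤ (q s (0+1) : ℝ) / ((0:ℕ)+1) := ciInf_le (th_bdd hb) 0
    have h2 : q s 1 ≤ 1 := q_le_k hb 1
    have h3 : (q s 1 : ℝ) ≤ 1 := by exact_mod_cast h2
    norm_num at h1
    linarith
  have hIoo : θ ∈ Set.Ioo (0:ℝ) 1 := by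
    constructor
    · rcases lt_or_eq_of_le hθ0 with h | h
      · exact h
      · exact absurd ⟨0, by rw [← h]; norm_num⟩ irr
    · rcases lt_or_eq_of_le hθ1 with h | h
      · exact h
      · exact absurd ⟨1, by rw [h]; norm_num⟩ irr
  have habs : ∀ n m : ℕ, n ≠ m → |aseq s θ n - aseq s θ m| < 1 := by
    have key : ∀ m k : ℕ, 1 ≤ k → |aseq s θ (m+k) - aseq s θ m| < 1 := by
      intro m k hk
      rw [aseq_diff]
      have h1 := q_ge hbal k m
      have h2 := q_lb hbal k m
      have h3 := th_le' hb k hk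
      have h4 := th_ge' hbal hb k hk
      have h5 : (k:ℝ)*θ ≠ (q s k : ℝ) := hnoint k hk (q s k)
      have h6 : (k:ℝ)*θ ≠ ((q s k - 1 : ℤ) : ℝ) := hnoint k hk (q s k - 1)
      have h1' : ((H s k m : ℤ):ℝ) ≤ (q s k : ℝ) := by exact_mod_cast h1
      have h2' : ((q s k : ℤ):ℝ) - 1 ≤ ((H s k m : ℤ):ℝ) := by
        have : ((q s k - 1 : ℤ):ℝ) ≤ ((H s k m : ℤ):ℝ) := by exact_mod_cast h2
        push_cast at this ⊢
        linarith
      have h6' : (k:ℝ)*θ ≠ (q s k : ℝ) - 1 := by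
        intro hcon
        apply h6
        push_cast
        linarith
      rw [← hθdef] at h3 h4
      have hlt1 : (q s k : ℝ) - 1 < (k:ℝ)*θ := lt_of_le_of_ne h4 (Ne.symm h6')
      have hlt2 : (k:ℝ)*θ < (q s k : ℝ) := lt_of_le_of_ne h3 h5
      rw [abs_lt]
      constructor
      · linarith
      · linarith
    intro n m hnm
    rcases lt_or_gt_of_ne hnm with h | h
    · rw [abs_sub_comm]
      have := key n (m - n) (by omega)
      rw [show n + (m-n) = m by omega] at this
      exact this
    · have := key m (n - m) (by omega)
      rw [show m + (n-m) = n by omega] at this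
      exact this
  have hpw_le : ∀ n m : ℕ, aseq s θ n ≤ aseq s θ m + 1 := by
    intro n m
    by_cases hnm : n = m
    · subst hnm; linarith
    · have := habs n m hnm
      rw [abs_lt] at this
      linarith [this.2]
  have hbnd : ∀ n, |aseq s θ n| ≤ 1 := by
    intro n
    by_cases hn : n = 0
    · subst hn; rw [aseq_zero]; norm_num
    · have := habs n 0 hn
      rw [aseq_zero] at this
      simpa using le_of_lt this
  have hne : (Set.range (aseq s θ)).Nonempty := ⟨aseq s θ 0, 0, rfl⟩
  have hbddA : BddAbove (Set.range (aseq s θ)) := by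
    refine ⟨1, ?_⟩
    rintro x ⟨n, rfl⟩
    have := hbnd n
    rw [abs_le] at this
    exact this.2
  have hbddB : BddBelow (Set.range (aseq s θ)) := by
    refine ⟨-1, ?_⟩
    rintro x ⟨n, rfl⟩
    have := hbnd n
    rw [abs_le] at this
    exact this.1
  set A := sSup (Set.range (aseq s θ)) with hAdef
  set B := sInf (Set.range (aseq s θ)) with hBdef
  have hAub : ∀ n, aseq s θ n ≤ A := fun n => le_csSup hbddA ⟨n, rfl⟩
  have hBlb : ∀ n, B ≤ aseq s θ n := fun n => csInf_le hbddB ⟨n, rfl⟩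
  have hA_le : ∀ m, A ≤ aseq s θ m + 1 := by
    intro m
    apply csSup_le hne
    rintro x ⟨n, rfl⟩
    exact hpw_le n m
  have hB_ge : ∀ m, aseq s θ m - 1 ≤ B := by
    intro m
    apply le_csInf hne
    rintro x ⟨n, rfl⟩
    linarith [hpw_le m n]
  have hAB : A - 1 ≤ B := by
    apply le_csInf hne
    rintro x ⟨n, rfl⟩
    linarith [hA_le n]
  refine ⟨θ, irr, hIoo, ?_⟩
  by_cases hI : ∀ m, A < aseq s θ m + 1
  · -- floor form with ρ = A - θ
    have hflr : ∀ n : ℕ, ⌊(n:ℝ)*θ + A⌋ = S s n := by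
      intro n
      rw [Int.floor_eq_iff]
      have h1 := hAub n
      have h2 := hI n
      unfold aseq at h1 h2
      constructor
      · push_cast; linarith
      · push_cast; linarith
    refine ⟨A - θ, Or.inl ?_⟩
    intro n hn
    obtain ⟨n', rfl⟩ : ∃ n', n = n' + 1 := ⟨n - 1, by omega⟩
    have e1 : (((n'+1:ℕ):ℝ)+1)*θ + (A-θ) = ((n'+1:ℕ):ℝ)*θ + A := by push_cast; ring
    have e2 : ((n'+1:ℕ):ℝ)*θ + (A-θ) = ((n':ℕ):ℝ)*θ + A := by push_cast; ring
    rw [e1, e2, hflr (n'+1), hflr n']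
    have := S_succ s n'
    omega
  · -- ceiling form with ρ = B - θ
    push_neg at hI
    obtain ⟨m₀, hm₀⟩ := hI
    have hAm : A = aseq s θ m₀ + 1 := le_antisymm (hA_le m₀) hm₀
    have hBgt : ∀ n, aseq s θ n - 1 < B := by
      intro n
      rcases lt_or_ge (aseq s θ n - 1) B with h | h
      · exact h
      · exfalso
        have hBn : B = aseq s θ n - 1 := le_antisymm h (hB_ge n)
        by_cases hnm : n = m₀
        · subst hnm
          have h1 := hBlb n
          linarith [hAB]
        · have h2 := habs n m₀ hnm
          rw [abs_lt] at h2
          have h3 := hAub n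
          have h4 := hBlb m₀
          linarith [h2.1, h2.2, hAB]
    have hcil : ∀ n : ℕ, ⌈(n:ℝ)*θ + B⌉ = S s n := by
      intro n
      rw [Int.ceil_eq_iff]
      have h1 := hBlb n
      have h2 := hBgt n
      unfold aseq at h1 h2
      constructor
      · push_cast; linarith
      · push_cast; linarith
    refine ⟨B - θ, Or.inr ?_⟩
    intro n hn
    obtain ⟨n', rfl⟩ : ∃ n', n = n' + 1 := ⟨n - 1, by omega⟩
    have e1 : (((n'+1:ℕ):ℝ)+1)*θ + (B-θ) = ((n'+1:ℕ):ℝ)*θ + B := by push_cast; ring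
    have e2 : ((n'+1:ℕ):ℝ)*θ + (B-θ) = ((n':ℕ):ℝ)*θ + B := by push_cast; ring
    rw [e1, e2, hcil (n'+1), hcil n']
    have := S_succ s n'
    omega


lemma tail_balanced (w : ℕ → ℤ) (hb : IsBinary w) (l : ℕ) (hl : 1 ≤ l)
    (hpre : ∀ i, 1 ≤ i → i < l + 1 → w i = w 1) (hwr : w (l+1) ≠ w 1)
    (h : ¬ ∃ u : List ℤ,
        Subword (0 :: 1 :: (u ++ [1])) w ∧ Subword (1 :: 0 :: (u ++ [0])) w) :
    Bal (fun n => w (n + l)) := by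
  classical
  set s : ℕ → ℤ := fun n => w (n + l) with hsdef
  have hbs : IsBinary s := fun i => hb (i + l)
  by_contra hcon
  unfold Bal at hcon
  push_neg at hcon
  obtain ⟨k1, n1, m1, hk1⟩ := hcon
  have hexk : ∃ k, ∃ n m, H s k m + 2 ≤ H s k n := ⟨k1, n1, m1, by omega⟩
  obtain ⟨n, m, hnm2⟩ := Nat.find_spec hexk
  have hmin : ∀ j, j < Nat.find hexk → ∀ n' m', H s j n' ≤ H s j m' + 1 := by
    intro j hj n' m'
    by_contra hc
    exact Nat.find_min hexk hj ⟨n', m', by omega⟩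
  have hk2 : 2 ≤ Nat.find hexk := by
    by_contra hlt
    have h01 : Nat.find hexk = 0 ∨ Nat.find hexk = 1 := by omega
    rcases h01 with h0 | h0 <;> rw [h0] at hnm2
    · rw [H_zero, H_zero] at hnm2; omega
    · rw [H_one, H_one] at hnm2
      rcases hbs (n+1) with h' | h' <;> rcases hbs (m+1) with h'' | h'' <;> omega
  obtain ⟨K, hK⟩ : ∃ K, Nat.find hexk = K + 2 := ⟨Nat.find hexk - 2, by omega⟩
  rw [hK] at hnm2
  simp only [hK] at hmin
  have hexact : H s (K+2) n = H s (K+2) m + 2 := by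
    have h1 := H_back s (K+1) n
    have h2 := H_back s (K+1) m
    rw [show K+1+1 = K+2 by omega] at h1 h2
    have h3 := hmin (K+1) (by omega) n m
    rcases hbs (n+(K+1)+1) with h4 | h4 <;> rcases hbs (m+(K+1)+1) with h5 | h5 <;> omega
  obtain ⟨h1n, h1m, h2n, h2m, hmid⟩ := SL hbs (by omega) hmin hexact
  simp only [show K+2-1 = K+1 by omega] at hmid
  -- the middle word as a list
  set tl : List ℤ := List.ofFn (fun i : Fin K => s (n + 2 + (i:ℕ))) with htl
  have htlen : tl.length = K := by simp [htl]
  have htlget : ∀ i, i < K → tl.getD i 0 = s (n + 2 + i) := by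
    intro i hi
    rw [htl, List.getD_eq_getElem _ _ (by simpa using hi)]
    simp
  rw [not_exists] at h
  have hor := not_and_or.mp (h tl)
  -- helper: build a Subword occurrence of x :: y :: (tl ++ [z])
  have mkSub : ∀ (x y z : ℤ) (p : ℕ), 1 ≤ p → w p = x → w (p+1) = y →
      (∀ i, i < K → w (p+2+i) = s (n+2+i)) → w (p+K+2) = z →
      Subword (x :: y :: (tl ++ [z])) w := by
    intro x y z p hp hx hy hmid2 hz
    refine ⟨p, hp, ?_⟩
    intro i hi
    have hlen : (x :: y :: (tl ++ [z])).length = K + 3 := by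
      simp [htlen]
    rw [hlen] at hi
    match i with
    | 0 => simpa using hx
    | 1 => simpa using hy
    | (i'+2) =>
      have hgd : (x :: y :: (tl ++ [z])).getD (i'+2) 0 = (tl ++ [z]).getD i' 0 := by
        simp [List.getD_cons_succ]
      rw [hgd]
      rcases Nat.lt_or_ge i' K with hlt2 | hge2
      · rw [List.getD_append _ _ _ _ (by rw [htlen]; exact hlt2)]
        rw [htlget i' hlt2, show p + (i'+2) = p+2+i' by ring]
        exact hmid2 i' hlt2
      · have hKe : i' = K := by omega
        rw [hKe]
        rw [List.getD_append_right _ _ _ _ (by rw [htlen]), htlen]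
        simp only [Nat.sub_self, List.getD_cons_zero]
        rw [show p + (K+2) = p+K+2 by ring]
        exact hz
  rcases hor with hno1 | hno2
  · -- no occurrence of 0 1 t 1 : all occurrences of 1t1 preceded by 1
    -- predecessor of the occurrence of 1t1 at s-offset n
    have hpred : w (n + l) = 1 := by
      rcases hb (n+l) with h0 | h0
      · exact absurd (mkSub 0 1 1 (n+l) (by omega) h0
          (by rw [show n+l+1 = n+1+l by ring]; exact h1n)
          (fun i hi => by rw [show n+l+2+i = n+2+i+l by ring])
          (by rw [show n+l+K+2 = n+(K+2)+l by ring]; exact h2n)) hno1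
      · exact h0
    rcases Nat.eq_zero_or_pos n with hn0 | hn0
    · -- n = 0 : w l = 1 is a prefix letter equal to w 1, but s 1 = 1 = w (l+1)
      subst hn0
      have hw1 : w 1 = 1 := by rw [← hpre l hl (by omega)]; simpa using hpred
      have : w (l+1) = 1 := by rw [show l+1 = 0+1+l by ring]; exact h1n
      exact hwr (by rw [this, hw1])
    · obtain ⟨n', rfl⟩ : ∃ n', n = n' + 1 := ⟨n-1, by omega⟩
      have hsn : s (n'+1) = 1 := hpred
      -- new minimal pair (n', m)
      have hexact2 : H s (K+2) n' = H s (K+2) m + 2 := by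
        have hf := H_front s (K+1) n'
        have hbk := H_back s (K+1) (n'+1)
        rw [show K+1+1 = K+2 by omega] at hf hbk
        rw [show n'+1+(K+1)+1 = n'+1+(K+2) by omega] at hbk
        have : s (n'+1+(K+2)) = 1 := h2n
        omega
      obtain ⟨g1n, g1m, g2n, g2m, gmid⟩ := SL hbs (by omega) hmin hexact2
      simp only [show K+2-1 = K+1 by omega] at gmid
      -- all letters s (n'+1+i), 1 ≤ i ≤ K+2 are 1; i.e. t = 1^K
      have hchain : ∀ j, j ≤ K → s (n'+1+1+j) = 1 := by
        intro j
        induction j with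
        | zero => intro _; exact h1n
        | succ j ih =>
          intro hj
          have e1 := gmid (j+2) (by omega) (by omega)
          have e2 := hmid (j+2) (by omega) (by omega)
          rw [show n'+(j+2) = n'+1+1+j by ring] at e1
          rw [show n'+1+(j+2) = n'+1+1+(j+1) by ring] at e2
          rw [e2, ← e1]
          exact ih (by omega)
      have hones : ∀ i, i < K+2 → s (n'+1+1+i) = 1 := by
        intro i hi
        rcases Nat.lt_or_ge i (K+1) with h' | h'
        · exact hchain i (by omega)
        · have : i = K+1 := by omega
          subst this
          rw [show n'+1+1+(K+1) = n'+1+(K+2) by ring]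
          exact h2n
      -- leftward propagation of the block of 1s
      have hocc : ∀ d, d ≤ n'+1 + l → ∀ i, i < K+2 → w (n'+1+1+l - d + i) = 1 := by
        intro d
        induction d with
        | zero =>
          intro _ i hi
          rw [show n'+1+1+l-0+i = n'+1+1+i+l by omega]
          exact hones i hi
        | succ d ih =>
          intro hd i hi
          have ihh := ih (by omega)
          have hp2 : 2 ≤ n'+1+1+l-d := by omega
          have hprev : w (n'+1+1+l-d-1) = 1 := by
            rcases hb (n'+1+1+l-d-1) with h0 | h0
            · exfalso
              apply hno1
              apply mkSub 0 1 1 (n'+1+1+l-d-1) (by omega) h0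
              · rw [show n'+1+1+l-d-1+1 = n'+1+1+l-d+0 by omega]
                exact ihh 0 (by omega)
              · intro i' hi'
                rw [show n'+1+1+l-d-1+2+i' = n'+1+1+l-d+(i'+1) by omega]
                rw [ihh (i'+1) (by omega), show n'+1+2+i' = n'+1+1+(i'+1) by ring,
                  hones (i'+1) (by omega)]
              · rw [show n'+1+1+l-d-1+K+2 = n'+1+1+l-d+(K+1) by omega]
                exact ihh (K+1) (by omega)
            · exact h0
          rw [show n'+1+1+l-(d+1)+i = n'+1+1+l-d-1+i by omega]
          rcases Nat.eq_zero_or_pos i with hi0 | hi0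
          · subst hi0; simpa using hprev
          · obtain ⟨i', rfl⟩ : ∃ i', i = i' + 1 := ⟨i-1, by omega⟩
            rw [show n'+1+1+l-d-1+(i'+1) = n'+1+1+l-d+i' by omega]
            exact ihh i' (by omega)
      have hw1 : w 1 = 1 := by
        have := hocc (n'+1+l) le_rfl 0 (by omega)
        rw [show n'+1+1+l-(n'+1+l)+0 = 1 by omega] at this
        exact this
      have hwl1 : w (l+1) = 1 := by
        have := hocc (n'+1) (by omega) 0 (by omega)
        rw [show n'+1+1+l-(n'+1)+0 = l+1 by omega] at this
        exact this
      exact hwr (by rw [hwl1, hw1])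
  · -- no occurrence of 1 0 t 0 : symmetric, with the 0t0 occurrence at offset m
    have hpred : w (m + l) = 0 := by
      rcases hb (m+l) with h0 | h0
      · exact h0
      · exact absurd (mkSub 1 0 0 (m+l) (by omega) h0
          (by rw [show m+l+1 = m+1+l by ring]; exact h1m)
          (fun i hi => by
            rw [show m+l+2+i = m+2+i+l by ring]
            show s (m+2+i) = s (n+2+i)
            rw [show m+2+i = m+(i+2) by ring, show n+2+i = n+(i+2) by ring]
            exact (hmid (i+2) (by omega) (by omega)).symm)
          (by rw [show m+l+K+2 = m+(K+2)+l by ring]; exact h2m)) hno2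
    rcases Nat.eq_zero_or_pos m with hm0 | hm0
    · subst hm0
      have hw1 : w 1 = 0 := by rw [← hpre l hl (by omega)]; simpa using hpred
      have : w (l+1) = 0 := by rw [show l+1 = 0+1+l by ring]; exact h1m
      exact hwr (by rw [this, hw1])
    · obtain ⟨m', rfl⟩ : ∃ m', m = m' + 1 := ⟨m-1, by omega⟩
      have hsm : s (m'+1) = 0 := hpred
      have hexact2 : H s (K+2) n = H s (K+2) m' + 2 := by
        have hf := H_front s (K+1) m'
        have hbk := H_back s (K+1) (m'+1)
        rw [show K+1+1 = K+2 by omega] at hf hbk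
        rw [show m'+1+(K+1)+1 = m'+1+(K+2) by omega] at hbk
        have : s (m'+1+(K+2)) = 0 := h2m
        omega
      obtain ⟨g1n, g1m, g2n, g2m, gmid⟩ := SL hbs (by omega) hmin hexact2
      simp only [show K+2-1 = K+1 by omega] at gmid
      have hchain : ∀ j, j ≤ K → s (m'+1+1+j) = 0 := by
        intro j
        induction j with
        | zero => intro _; exact h1m
        | succ j ih =>
          intro hj
          have e1 := gmid (j+2) (by omega) (by omega)
          have e2 := hmid (j+2) (by omega) (by omega)
          rw [show m'+(j+2) = m'+1+1+j by ring] at e1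
          rw [show m'+1+(j+2) = m'+1+1+(j+1) by ring] at e2
          rw [← e2, e1]
          exact ih (by omega)
      have hzeros : ∀ i, i < K+2 → s (m'+1+1+i) = 0 := by
        intro i hi
        rcases Nat.lt_or_ge i (K+1) with h' | h'
        · exact hchain i (by omega)
        · have : i = K+1 := by omega
          subst this
          rw [show m'+1+1+(K+1) = m'+1+(K+2) by ring]
          exact h2m
      have hocc : ∀ d, d ≤ m'+1 + l → ∀ i, i < K+2 → w (m'+1+1+l - d + i) = 0 := by
        intro d
        induction d with
        | zero =>
          intro _ i hi
          rw [show m'+1+1+l-0+i = m'+1+1+i+l by omega]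
          exact hzeros i hi
        | succ d ih =>
          intro hd i hi
          have ihh := ih (by omega)
          have hp2 : 2 ≤ m'+1+1+l-d := by omega
          have hprev : w (m'+1+1+l-d-1) = 0 := by
            rcases hb (m'+1+1+l-d-1) with h0 | h0
            · exact h0
            · exfalso
              apply hno2
              apply mkSub 1 0 0 (m'+1+1+l-d-1) (by omega) h0
              · rw [show m'+1+1+l-d-1+1 = m'+1+1+l-d+0 by omega]
                exact ihh 0 (by omega)
              · intro i' hi'
                rw [show m'+1+1+l-d-1+2+i' = m'+1+1+l-d+(i'+1) by omega]
                rw [ihh (i'+1) (by omega)]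
                show (0:ℤ) = s (n+2+i')
                rw [show n+2+i' = n+(i'+2) by ring]
                rw [hmid (i'+2) (by omega) (by omega)]
                rw [show m'+1+(i'+2) = m'+1+1+(i'+1) by ring]
                rw [hzeros (i'+1) (by omega)]
              · rw [show m'+1+1+l-d-1+K+2 = m'+1+1+l-d+(K+1) by omega]
                exact ihh (K+1) (by omega)
          rw [show m'+1+1+l-(d+1)+i = m'+1+1+l-d-1+i by omega]
          rcases Nat.eq_zero_or_pos i with hi0 | hi0
          · subst hi0; simpa using hprev
          · obtain ⟨i', rfl⟩ : ∃ i', i = i' + 1 := ⟨i-1, by omega⟩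
            rw [show m'+1+1+l-d-1+(i'+1) = m'+1+1+l-d+i' by omega]
            exact ihh i' (by omega)
      have hw1 : w 1 = 0 := by
        have := hocc (m'+1+l) le_rfl 0 (by omega)
        rw [show m'+1+1+l-(m'+1+l)+0 = 1 by omega] at this
        exact this
      have hwl1 : w (l+1) = 0 := by
        have := hocc (m'+1) (by omega) 0 (by omega)
        rw [show m'+1+1+l-(m'+1)+0 = l+1 by omega] at this
        exact this
      exact hwr (by rw [hwl1, hw1])

end Stmt8Aux



open Stmt8Aux in
theorem stmt8 (w : ℕ → ℤ) (hb : IsBinary w) (hap : Aperiodic w)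
    (h : ¬ ∃ u : List ℤ,
        Subword (0 :: 1 :: (u ++ [1])) w ∧ Subword (1 :: 0 :: (u ++ [0])) w) :
    MemS w := by
  classical
  have hex : ∃ i, 2 ≤ i ∧ w i ≠ w 1 := by
    by_contra hcon
    push_neg at hcon
    apply hap
    refine ⟨1, le_rfl, 1, le_rfl, fun n hn => ?_⟩
    have h1 : w (n+1) = w 1 := hcon (n+1) (by omega)
    rw [h1]
    rcases Nat.lt_or_ge n 2 with h2 | h2
    · have hn1 : n = 1 := by omega
      rw [hn1]
    · exact hcon n h2
  obtain ⟨l, hfind⟩ : ∃ l, Nat.find hex = l + 1 := ⟨Nat.find hex - 1, by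
    have := (Nat.find_spec hex).1; omega⟩
  obtain ⟨hr2', hwr⟩ := Nat.find_spec hex
  rw [hfind] at hr2' hwr
  have hl : 1 ≤ l := by omega
  have hpre : ∀ i, 1 ≤ i → i < l + 1 → w i = w 1 := by
    intro i h1 h2
    rcases Nat.lt_or_ge i 2 with h3 | h3
    · have hi1 : i = 1 := by omega
      rw [hi1]
    · by_contra hne
      exact (Nat.find_min hex (show i < Nat.find hex by omega)) ⟨h3, hne⟩
  set s : ℕ → ℤ := fun n => w (n + l) with hsdef
  have hbs : IsBinary s := fun i => hb (i + l)
  have haps : Aperiodic' s := by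
    rintro ⟨k, hk, N, hN, hper⟩
    apply hap
    refine ⟨k, hk, N + l, by omega, fun n hn => ?_⟩
    obtain ⟨mm, rfl⟩ : ∃ mm, n = mm + l := ⟨n - l, by omega⟩
    have hmm := hper mm (by omega)
    show w (mm + l) = w (mm + l + k)
    rw [show mm + l + k = mm + k + l by ring]
    exact hmm
  have hbal : Bal s := tail_balanced w hb l hl hpre hwr h
  obtain ⟨θ, hst⟩ := sturmian_of_balanced hbs haps hbal
  refine ⟨w 1, l, s, θ, hb 1, hst, ?_⟩
  intro i hi
  unfold Prepend
  by_cases hil : i ≤ l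
  · rw [if_pos hil]
    exact hpre i hi (by omega)
  · rw [if_neg hil]
    show w i = w (i - l + l)
    rw [Nat.sub_add_cancel (by omega)]
end

section
/- Let D be the doubling map on infinite binary words, D(w₁w₂w₃…) = w₁w₁w₂w₂w₃w₃…, and T the shift. Define D-class 𝒟 as the set of words of the form 0^l(Ds) or 1^l(Ds) with l ≥ 0 and s Sturmian. Then 𝒟 equals the disjoint union of D(S) and T(D(S)), where S is the set of words 0^l s or 1^l s with s Sturmian. -/
lemma eqw_trans {a b c : ℕ → ℤ} (h1 : EqW a b) (h2 : EqW b c) : EqW a c :=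
  fun i hi => (h1 i hi).trans (h2 i hi)

lemma eqw_symm {a b : ℕ → ℤ} (h : EqW a b) : EqW b a :=
  fun i hi => (h i hi).symm

lemma eqw_dbl {a b : ℕ → ℤ} (h : EqW a b) : EqW (Dbl a) (Dbl b) := by
  intro i hi
  simp only [Dbl]
  exact h ((i+1)/2) (by omega)

lemma eqw_shf_dbl {a b : ℕ → ℤ} (h : EqW a b) : EqW (Shf (Dbl a)) (Shf (Dbl b)) := by
  intro i hi
  simp only [Shf, Dbl]
  exact h ((i+1+1)/2) (by omega)

lemma sturm_binary {θ : ℝ} {s : ℕ → ℤ} (h : IsSturmian θ s) :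
    ∀ n, 1 ≤ n → s n = 0 ∨ s n = 1 := by
  obtain ⟨hirr, ⟨hθ0, hθ1⟩, ρ, hf | hc⟩ := h
  · intro n hn
    rw [hf n hn]
    have h1 : ⌊(n:ℝ)*θ+ρ⌋ ≤ ⌊((n:ℝ)+1)*θ+ρ⌋ := Int.floor_mono (by nlinarith)
    have h2 : ⌊((n:ℝ)+1)*θ+ρ⌋ ≤ ⌊(n:ℝ)*θ+ρ⌋ + 1 := by
      have := Int.floor_mono (R := ℝ) (a := ((n:ℝ)+1)*θ+ρ) (b := (n:ℝ)*θ+ρ + 1)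
        (by nlinarith)
      rwa [Int.floor_add_one] at this
    omega
  · intro n hn
    rw [hc n hn]
    have h1 : ⌈(n:ℝ)*θ+ρ⌉ ≤ ⌈((n:ℝ)+1)*θ+ρ⌉ := Int.ceil_mono (by nlinarith)
    have h2 : ⌈((n:ℝ)+1)*θ+ρ⌉ ≤ ⌈(n:ℝ)*θ+ρ⌉ + 1 := by
      have := Int.ceil_mono (R := ℝ) (a := ((n:ℝ)+1)*θ+ρ) (b := (n:ℝ)*θ+ρ + 1)
        (by nlinarith)
      rwa [Int.ceil_add_one] at this
    omega

lemma sturm_shift {θ : ℝ} {s : ℕ → ℤ} (h : IsSturmian θ s) : IsSturmian θ (Shf s) := by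
  obtain ⟨hirr, hio, ρ, hf | hc⟩ := h
  · refine ⟨hirr, hio, ρ + θ, Or.inl (fun n hn => ?_)⟩
    have h1 := hf (n+1) (by omega)
    have e1 : ((↑(n+1):ℝ)+1)*θ+ρ = ((n:ℝ)+1)*θ+(ρ+θ) := by push_cast; ring
    have e2 : ((↑(n+1):ℝ))*θ+ρ = ((n:ℝ))*θ+(ρ+θ) := by push_cast; ring
    simp only [Shf]
    rw [h1, e1, e2]
  · refine ⟨hirr, hio, ρ + θ, Or.inr (fun n hn => ?_)⟩
    have h1 := hc (n+1) (by omega)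
    have e1 : ((↑(n+1):ℝ)+1)*θ+ρ = ((n:ℝ)+1)*θ+(ρ+θ) := by push_cast; ring
    have e2 : ((↑(n+1):ℝ))*θ+ρ = ((n:ℝ))*θ+(ρ+θ) := by push_cast; ring
    simp only [Shf]
    rw [h1, e1, e2]

lemma sturm_nonconst {θ : ℝ} {s : ℕ → ℤ} (h : IsSturmian θ s) :
    ¬ (∀ n, 1 ≤ n → s n = s 1) := by
  intro hconst
  have hbin := sturm_binary h 1 le_rfl
  obtain ⟨hirr, ⟨hθ0, hθ1⟩, ρ, hf | hc⟩ := h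
  · -- floor case
    have key : ∀ n : ℕ, ⌊((n:ℝ)+1)*θ+ρ⌋ = ⌊(1:ℝ)*θ+ρ⌋ + s 1 * n := by
      intro n
      induction n with
      | zero => norm_num
      | succ k ih =>
        have h1 := hf (k+1) (by omega)
        have h2 := hconst (k+1) (by omega)
        rw [h2] at h1
        push_cast at h1 ⊢
        linear_combination ih - h1
    rcases hbin with hc0 | hc1
    · obtain ⟨n, hn⟩ := exists_nat_gt (((⌊(1:ℝ)*θ+ρ⌋ : ℝ) + 1 - ρ)/θ)
      have hk := key n
      rw [hc0] at hk
      simp only [zero_mul, add_zero] at hk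
      have hlt : ((n:ℝ)+1)*θ+ρ < (⌊((n:ℝ)+1)*θ+ρ⌋ : ℝ) + 1 := Int.lt_floor_add_one _
      rw [hk] at hlt
      have hd : ((⌊(1:ℝ)*θ+ρ⌋ : ℝ) + 1 - ρ) < (n:ℝ) * θ := (div_lt_iff₀ hθ0).mp hn
      nlinarith
    · obtain ⟨n, hn⟩ := exists_nat_gt ((θ + ρ - (⌊(1:ℝ)*θ+ρ⌋ : ℝ))/(1-θ))
      have hk := key n
      rw [hc1] at hk
      have hle : ((⌊((n:ℝ)+1)*θ+ρ⌋ : ℝ)) ≤ ((n:ℝ)+1)*θ+ρ := Int.floor_le _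
      rw [hk] at hle
      push_cast at hle
      have hd : (θ + ρ - (⌊(1:ℝ)*θ+ρ⌋ : ℝ)) < (n:ℝ) * (1-θ) :=
        (div_lt_iff₀ (by linarith)).mp hn
      nlinarith
  · -- ceiling case
    have key : ∀ n : ℕ, ⌈((n:ℝ)+1)*θ+ρ⌉ = ⌈(1:ℝ)*θ+ρ⌉ + s 1 * n := by
      intro n
      induction n with
      | zero => norm_num
      | succ k ih =>
        have h1 := hc (k+1) (by omega)
        have h2 := hconst (k+1) (by omega)
        rw [h2] at h1
        push_cast at h1 ⊢
        linear_combination ih - h1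
    rcases hbin with hc0 | hc1
    · obtain ⟨n, hn⟩ := exists_nat_gt (((⌈(1:ℝ)*θ+ρ⌉ : ℝ) - ρ)/θ)
      have hk := key n
      rw [hc0] at hk
      simp only [zero_mul, add_zero] at hk
      have hle : ((n:ℝ)+1)*θ+ρ ≤ (⌈((n:ℝ)+1)*θ+ρ⌉ : ℝ) := Int.le_ceil _
      rw [hk] at hle
      have hd : ((⌈(1:ℝ)*θ+ρ⌉ : ℝ) - ρ) < (n:ℝ) * θ := (div_lt_iff₀ hθ0).mp hn
      nlinarith
    · obtain ⟨n, hn⟩ := exists_nat_gt ((θ + ρ + 1 - (⌈(1:ℝ)*θ+ρ⌉ : ℝ))/(1-θ))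
      have hk := key n
      rw [hc1] at hk
      have hlt : ((⌈((n:ℝ)+1)*θ+ρ⌉ : ℝ)) < ((n:ℝ)+1)*θ+ρ + 1 := Int.ceil_lt_add_one _
      rw [hk] at hlt
      push_cast at hlt
      have hd : (θ + ρ + 1 - (⌈(1:ℝ)*θ+ρ⌉ : ℝ)) < (n:ℝ) * (1-θ) :=
        (div_lt_iff₀ (by linarith)).mp hn
      nlinarith

lemma dbl_prepend_even (a : ℤ) (l : ℕ) (s : ℕ → ℤ) :
    EqW (Prepend a (2*l) (Dbl s)) (Dbl (Prepend a l s)) := by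
  intro n hn
  simp only [Prepend, Dbl]
  rcases le_or_gt n (2*l) with h | h
  · rw [if_pos h, if_pos (by omega)]
  · rw [if_neg (by omega), if_neg (by omega)]
    congr 1
    omega

lemma dbl_prepend_odd (a : ℤ) (l : ℕ) (s : ℕ → ℤ) :
    EqW (Prepend a (2*l+1) (Dbl s)) (Shf (Dbl (Prepend a (l+1) s))) := by
  intro n hn
  simp only [Prepend, Dbl, Shf]
  rcases le_or_gt n (2*l+1) with h | h
  · rw [if_pos h, if_pos (by omega)]
  · rw [if_neg (by omega), if_neg (by omega)]
    congr 1
    omega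

lemma shf_dbl_zero (s : ℕ → ℤ) : EqW (Shf (Dbl s)) (Prepend (s 1) 1 (Dbl (Shf s))) := by
  intro n hn
  simp only [Prepend, Dbl, Shf]
  rcases le_or_gt n 1 with h | h
  · rw [if_pos h]
    have : n = 1 := by omega
    subst this
    norm_num
  · rw [if_neg (by omega)]
    congr 1
    omega

theorem stmt10 (w : ℕ → ℤ) :
    (MemD w ↔ ((∃ v, MemS v ∧ EqW w (Dbl v)) ∨ (∃ v, MemS v ∧ EqW w (Shf (Dbl v))))) ∧
    ¬ ((∃ v, MemS v ∧ EqW w (Dbl v)) ∧ (∃ v, MemS v ∧ EqW w (Shf (Dbl v)))) := by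
  constructor
  · constructor
    · rintro ⟨a, l, s, θ, ha, hs, hw⟩
      rcases Nat.even_or_odd l with ⟨m, hm⟩ | ⟨m, hm⟩
      · left
        have hm2 : l = 2*m := by omega
        subst hm2
        exact ⟨Prepend a m s, ⟨a, m, s, θ, ha, hs, fun i hi => rfl⟩,
          eqw_trans hw (dbl_prepend_even a m s)⟩
      · right
        subst hm
        exact ⟨Prepend a (m+1) s, ⟨a, m+1, s, θ, ha, hs, fun i hi => rfl⟩,
          eqw_trans hw (dbl_prepend_odd a m s)⟩
    · rintro (⟨v, ⟨a, l, s, θ, ha, hs, hv⟩, hw⟩ | ⟨v, ⟨a, l, s, θ, ha, hs, hv⟩, hw⟩)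
      · exact ⟨a, 2*l, s, θ, ha, hs,
          eqw_trans hw (eqw_trans (eqw_dbl hv) (eqw_symm (dbl_prepend_even a l s)))⟩
      · rcases l with _ | m
        · -- l = 0 : v agrees with s
          have hvs : EqW v s := by
            intro i hi
            have := hv i hi
            simp only [Prepend] at this
            rw [if_neg (by omega)] at this
            simpa using this
          exact ⟨s 1, 1, Shf s, θ, sturm_binary hs 1 le_rfl, sturm_shift hs,
            eqw_trans hw (eqw_trans (eqw_shf_dbl hvs) (shf_dbl_zero s))⟩
        · exact ⟨a, 2*m+1, s, θ, ha, hs,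
            eqw_trans hw (eqw_trans (eqw_shf_dbl hv) (eqw_symm (dbl_prepend_odd a m s)))⟩
  · rintro ⟨⟨v, ⟨a, l, s, θ, ha, hs, hv⟩, hw1⟩, ⟨v', ⟨a', l', s', θ', ha', hs', hv'⟩, hw2⟩⟩
    have hvv : ∀ k, 1 ≤ k → v k = v (k+1) := by
      intro k hk
      have e1 := hw1 (2*k) (by omega)
      have e2 := hw1 (2*k+1) (by omega)
      have e3 := hw2 (2*k) (by omega)
      have e4 := hw2 (2*k+1) (by omega)
      simp only [Dbl, Shf] at e1 e2 e3 e4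
      rw [show (2*k+1)/2 = k from by omega] at e1
      rw [show (2*k+1+1)/2 = k+1 from by omega] at e2 e3
      rw [show (2*k+1+1+1)/2 = k+1 from by omega] at e4
      omega
    have hvconst : ∀ n, 1 ≤ n → v n = v 1 := by
      intro n hn
      induction n with
      | zero => omega
      | succ k ih =>
        rcases Nat.eq_or_lt_of_le hn with h | h
        · rw [← h]
        · rw [← hvv k (by omega)]
          exact ih (by omega)
    have hsconst : ∀ n, 1 ≤ n → s n = s 1 := by
      have hsv : ∀ n, 1 ≤ n → s n = v (n + l) := by
        intro n hn
        have := hv (n+l) (by omega)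
        simp only [Prepend] at this
        rw [if_neg (by omega)] at this
        rw [show n + l - l = n from by omega] at this
        exact this.symm
      intro n hn
      rw [hsv n hn, hsv 1 le_rfl, hvconst (n+l) (by omega), hvconst (1+l) (by omega)]
    exact sturm_nonconst hs hsconst
end

section
/- For any 0 < r < 1, any letter a ∈ {0,1}, and any infinite binary sequence u: t_{−r}(Du) = −(r^{−1} − 1)·t_{r²}(u) and t_{−r}(a·Du) = −a·r + (1−r)·t_{r²}(u), where D doubles each letter. -/
lemma summ_aux (x : ℝ) (hx : |x| < 1) (s : ℕ → ℤ) (hs : ∀ i, |s i| ≤ 1) :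
    Summable (fun k : ℕ => (s (k+1) : ℝ) * x^(k+1)) := by
  apply Summable.of_norm
  apply Summable.of_nonneg_of_le (fun k => norm_nonneg _) (fun k => ?_)
    ((summable_geometric_of_lt_one (abs_nonneg x) hx).mul_left |x|)
  have h1 : |(s (k+1) : ℝ)| ≤ 1 := by
    rw [← Int.cast_abs]
    exact_mod_cast hs (k+1)
  calc ‖(s (k+1) : ℝ) * x^(k+1)‖ = |(s (k+1) : ℝ)| * |x|^(k+1) := by
        rw [norm_mul, norm_pow]; rfl
    _ ≤ 1 * |x|^(k+1) := by
        apply mul_le_mul_of_nonneg_right h1 (pow_nonneg (abs_nonneg x) _)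
    _ = |x| * |x|^k := by ring

theorem stmt14 (r : ℝ) (h0 : 0 < r) (h1 : r < 1) (a : ℤ) (ha : a = 0 ∨ a = 1)
    (u : ℕ → ℤ) (hu : IsBinary u) :
    tval (-r) (Dbl u) = -(r⁻¹ - 1) * tval (r^2) u ∧
    tval (-r) (Prepend a 1 (Dbl u)) = -(a:ℝ) * r + (1 - r) * tval (r^2) u := by
  have hu1 : ∀ i, |u i| ≤ 1 := fun i => by rcases hu i with h | h <;> simp [h]
  have hd1 : ∀ i, |Dbl u i| ≤ 1 := fun i => hu1 _
  have hp1 : ∀ i, |Prepend a 1 (Dbl u) i| ≤ 1 := fun i => by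
    unfold Prepend; split
    · rcases ha with h | h <;> simp [h]
    · exact hd1 _
  have habs : |(-r)| < 1 := by rw [abs_neg, abs_of_pos h0]; exact h1
  have habs2 : |r^2| < 1 := by
    rw [abs_of_pos (pow_pos h0 2)]
    calc r^2 = r * r := sq r
      _ < 1 * 1 := by apply mul_lt_mul' h1.le h1 h0.le one_pos
      _ = 1 := one_mul 1
  have hS : Summable (fun k : ℕ => (Dbl u (k+1) : ℝ) * (-r)^(k+1)) :=
    summ_aux _ habs _ hd1
  have hSu : Summable (fun k : ℕ => (u (k+1) : ℝ) * (r^2)^(k+1)) :=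
    summ_aux _ habs2 _ hu1
  have he : ∀ k : ℕ, (Dbl u (2*k+1) : ℝ) * (-r)^(2*k+1) = (u (k+1) : ℝ) * (-r)^(2*k+1) := by
    intro k
    have : (2*k+1+1)/2 = k+1 := by omega
    simp [Dbl, this]
  have ho : ∀ k : ℕ, (Dbl u (2*k+2) : ℝ) * (-r)^(2*k+2) = (u (k+1) : ℝ) * (-r)^(2*k+2) := by
    intro k
    have : (2*k+2+1)/2 = k+1 := by omega
    simp [Dbl, this]
  have hr0 : r ≠ 0 := ne_of_gt h0
  have heq_e : ∀ k : ℕ, (Dbl u (2*k+1) : ℝ) * (-r)^(2*k+1)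
      = ((u (k+1) : ℝ) * (r^2)^(k+1)) * (-r⁻¹) := by
    intro k
    rw [he k, Odd.neg_pow ⟨k, by ring⟩]
    field_simp
    ring
  have heq_o : ∀ k : ℕ, (Dbl u (2*k+2) : ℝ) * (-r)^(2*k+2)
      = (u (k+1) : ℝ) * (r^2)^(k+1) := by
    intro k
    rw [ho k, Even.neg_pow ⟨k+1, by ring⟩]
    ring
  have key : tval (-r) (Dbl u) = -(r⁻¹ - 1) * tval (r^2) u := by
    unfold tval
    set f : ℕ → ℝ := fun k => (Dbl u (k+1) : ℝ) * (-r)^(k+1) with hf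
    have hfe : ∀ k : ℕ, f (2*k) = ((u (k+1) : ℝ) * (r^2)^(k+1)) * (-r⁻¹) := by
      intro k; simpa using heq_e k
    have hfo : ∀ k : ℕ, f (2*k+1) = (u (k+1) : ℝ) * (r^2)^(k+1) := by
      intro k
      have : 2*k+1+1 = 2*k+2 := by ring
      simp only [hf, this]
      exact heq_o k
    have hse : Summable (fun k : ℕ => f (2*k)) :=
      (hSu.mul_right (-r⁻¹)).congr (fun k => (hfe k).symm)
    have hso : Summable (fun k : ℕ => f (2*k+1)) :=
      hSu.congr (fun k => (hfo k).symm)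
    rw [← tsum_even_add_odd hse hso, tsum_congr hfe, tsum_congr hfo,
      tsum_mul_right]
    field_simp
    ring
  constructor
  · exact key
  · -- second part
    unfold tval
    have hSp : Summable (fun k : ℕ => (Prepend a 1 (Dbl u) (k+1) : ℝ) * (-r)^(k+1)) :=
      summ_aux _ habs _ hp1
    rw [Summable.tsum_eq_zero_add hSp]
    have h0' : (Prepend a 1 (Dbl u) (0+1) : ℝ) * (-r)^(0+1) = -(a:ℝ) * r := by
      simp [Prepend]
    have hrest : ∀ k : ℕ, (Prepend a 1 (Dbl u) (k+1+1) : ℝ) * (-r)^(k+1+1)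
        = ((Dbl u (k+1) : ℝ) * (-r)^(k+1)) * (-r) := by
      intro k
      have : ¬ (k+1+1 ≤ 1) := by omega
      simp only [Prepend, if_neg this]
      have : k+1+1-1 = k+1 := by omega
      rw [this, pow_succ]; ring
    rw [h0']
    have : ∑' (k : ℕ), (Prepend a 1 (Dbl u) (k+1+1) : ℝ) * (-r)^(k+1+1)
        = (∑' (k : ℕ), (Dbl u (k+1) : ℝ) * (-r)^(k+1)) * (-r) := by
      rw [← tsum_mul_right]
      exact tsum_congr hrest
    rw [this]
    have : (∑' (k : ℕ), (Dbl u (k+1) : ℝ) * (-r)^(k+1)) = -(r⁻¹ - 1) * tval (r^2) u := key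
    rw [this]
    unfold tval
    field_simp
end

section
/- Let 0 < r < 1 and w ∈ 𝒫 = D({0,1}^ℕ) ∪ T(D({0,1}^ℕ)). If w ≼_alt 1^∞ then t_{−r}(w) ≤ t_{−r}(1^∞) = −r/(1+r), with equality iff w = 1^∞. If 0^∞ ≼_alt w then t_{−r}(w) ≥ 0, with equality iff w = 0^∞. -/
/-! ### Auxiliary lemmas -/

lemma bin_cast01 {u : ℕ → ℤ} (hu : IsBinary u) (i : ℕ) :
    (0:ℝ) ≤ (u i : ℝ) ∧ (u i : ℝ) ≤ 1 := by
  rcases hu i with h | h <;> simp [h]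

lemma tval_congr {x : ℝ} {s s' : ℕ → ℤ} (h : EqW s s') : tval x s = tval x s' := by
  unfold tval
  exact tsum_congr fun i => by rw [h (i+1) (by omega)]

lemma tval_one_eq (r : ℝ) (h0 : 0 < r) (h1 : r < 1) :
    tval (-r) (fun _ => (1:ℤ)) = -r/(1+r) := by
  unfold tval
  have hn : ‖(-r : ℝ)‖ < 1 := by
    rw [norm_neg, Real.norm_of_nonneg h0.le]; exact h1
  have h := (hasSum_geometric_of_norm_lt_one hn).mul_left (-r)
  have h2 : HasSum (fun i : ℕ => ((1:ℤ):ℝ) * (-r)^(i+1)) (-r * (1 - -r)⁻¹) := by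
    convert h using 2 with i
    · rfl
    rw [pow_succ]
    push_cast
    ring
  rw [h2.tsum_eq]
  have h3 : (1:ℝ) - -r = 1 + r := by ring
  rw [h3, div_eq_mul_inv]

lemma tval_zero_eq (x : ℝ) : tval x (fun _ => (0:ℤ)) = 0 := by
  simp [tval]

lemma alt_parity {n : ℕ} {b c : ℤ} (hb : b = 0 ∨ b = 1) (hc : c = 0 ∨ c = 1)
    (h : (-1:ℤ)^n * (c - b) = 1) :
    (Even n ∧ b = 0 ∧ c = 1) ∨ (Odd n ∧ b = 1 ∧ c = 0) := by
  rcases Nat.even_or_odd n with he | ho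
  · rw [he.neg_one_pow, one_mul] at h
    refine Or.inl ⟨he, ?_, ?_⟩ <;>
      rcases hb with hb | hb <;> rcases hc with hc | hc <;> omega
  · rw [ho.neg_one_pow, neg_one_mul] at h
    refine Or.inr ⟨ho, ?_, ?_⟩ <;>
      rcases hb with hb | hb <;> rcases hc with hc | hc <;> omega

lemma dbl_pair {u w : ℕ → ℤ} (hw : EqW w (Dbl u)) {m : ℕ} (hm : 1 ≤ m) :
    w (2*m - 1) = w (2*m) := by
  rw [hw _ (by omega), hw _ (by omega)]
  show u ((2*m - 1 + 1)/2) = u ((2*m + 1)/2)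
  congr 1
  omega

lemma dbl_binary {u : ℕ → ℤ} (hu : IsBinary u) {w : ℕ → ℤ} (hw : EqW w (Dbl u))
    {n : ℕ} (hn : 1 ≤ n) : w n = 0 ∨ w n = 1 := by
  rw [hw n hn]; exact hu _

lemma shf_dbl_binary {u : ℕ → ℤ} (hu : IsBinary u) {w : ℕ → ℤ}
    (hw : EqW w (Shf (Dbl u))) {n : ℕ} (hn : 1 ≤ n) : w n = 0 ∨ w n = 1 := by
  rw [hw n hn]; exact hu _

lemma dbl_no_alt_top {u w : ℕ → ℤ} (hu : IsBinary u) (hw : EqW w (Dbl u)) :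
    ¬ AltLt w (fun _ => (1:ℤ)) := by
  rintro ⟨n, hn1, hag, heq⟩
  have heq' : (-1:ℤ)^n * (1 - w n) = 1 := heq
  rcases alt_parity (dbl_binary hu hw hn1) (Or.inr rfl) heq' with ⟨he, hb0, -⟩ | ⟨-, -, hc⟩
  swap
  · exact absurd hc (by omega)
  obtain ⟨m, hm⟩ := he
  have hn2 : n = 2*m := by omega
  subst hn2
  have hm1 : 1 ≤ m := by omega
  have hpair := dbl_pair hw hm1
  have hag' : w (2*m - 1) = 1 := hag (2*m - 1) (by omega) (by omega)
  omega

lemma dbl_no_alt_bot {u w : ℕ → ℤ} (hu : IsBinary u) (hw : EqW w (Dbl u)) :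
    ¬ AltLt (fun _ => (0:ℤ)) w := by
  rintro ⟨n, hn1, hag, heq⟩
  have heq' : (-1:ℤ)^n * (w n - 0) = 1 := heq
  rcases alt_parity (Or.inl rfl) (dbl_binary hu hw hn1) heq' with ⟨he, -, hb1⟩ | ⟨-, hb, -⟩
  swap
  · exact absurd hb (by omega)
  obtain ⟨m, hm⟩ := he
  have hn2 : n = 2*m := by omega
  subst hn2
  have hm1 : 1 ≤ m := by omega
  have hpair := dbl_pair hw hm1
  have hag' : (0:ℤ) = w (2*m - 1) := hag (2*m - 1) (by omega) (by omega)
  omega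

lemma summable_geo_sq {r : ℝ} (h0 : 0 < r) (h1 : r < 1) :
    HasSum (fun k : ℕ => r^(2*k+2)) (r^2/(1 - r^2)) := by
  have hr2 : (0:ℝ) ≤ r^2 := sq_nonneg r
  have hr2' : r^2 < 1 := by nlinarith
  have h := (hasSum_geometric_of_lt_one hr2 hr2').mul_left (r^2)
  have h2 : HasSum (fun k : ℕ => r^(2*k+2)) (r^2 * (1 - r^2)⁻¹) := by
    convert h using 2 with k
    · rfl
    rw [← pow_mul]
    ring
  rwa [← div_eq_mul_inv] at h2

lemma term_le {r : ℝ} (h0 : 0 < r) {u : ℕ → ℤ} (hu : IsBinary u) (k : ℕ) :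
    (u (k+2) : ℝ) * r^(2*k+2) ≤ r^(2*k+2) := by
  calc (u (k+2) : ℝ) * r^(2*k+2) ≤ 1 * r^(2*k+2) :=
        mul_le_mul_of_nonneg_right (bin_cast01 hu (k+2)).2 (pow_nonneg h0.le _)
    _ = r^(2*k+2) := one_mul _

lemma summable_gA {r : ℝ} (h0 : 0 < r) (h1 : r < 1) {u : ℕ → ℤ} (hu : IsBinary u) :
    Summable (fun k : ℕ => (u (k+2) : ℝ) * r^(2*k+2)) := by
  exact Summable.of_nonneg_of_le
    (fun k => mul_nonneg (bin_cast01 hu (k+2)).1 (pow_nonneg h0.le _))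
    (term_le h0 hu) (summable_geo_sq h0 h1).summable

lemma A_nonneg {r : ℝ} (h0 : 0 < r) {u : ℕ → ℤ} (hu : IsBinary u) :
    0 ≤ ∑' k : ℕ, (u (k+2) : ℝ) * r^(2*k+2) :=
  tsum_nonneg fun k => mul_nonneg (bin_cast01 hu (k+2)).1 (pow_nonneg h0.le _)

lemma A_le {r : ℝ} (h0 : 0 < r) (h1 : r < 1) {u : ℕ → ℤ} (hu : IsBinary u) :
    ∑' k : ℕ, (u (k+2) : ℝ) * r^(2*k+2) ≤ r^2/(1 - r^2) := by
  rw [← (summable_geo_sq h0 h1).tsum_eq]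
  exact Summable.tsum_le_tsum (term_le h0 hu) (summable_gA h0 h1 hu) (summable_geo_sq h0 h1).summable

lemma A_lt {r : ℝ} (h0 : 0 < r) (h1 : r < 1) {u : ℕ → ℤ} (hu : IsBinary u)
    {m : ℕ} (hm : u (m+2) = 0) :
    ∑' k : ℕ, (u (k+2) : ℝ) * r^(2*k+2) < r^2/(1 - r^2) := by
  rw [← (summable_geo_sq h0 h1).tsum_eq]
  apply Summable.tsum_lt_tsum_of_nonneg (i := m)
    (fun k => mul_nonneg (bin_cast01 hu (k+2)).1 (pow_nonneg h0.le _))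
    (term_le h0 hu) ?_ (summable_geo_sq h0 h1).summable
  rw [hm]
  simpa using pow_pos h0 (2*m+2)

lemma A_pos {r : ℝ} (h0 : 0 < r) (h1 : r < 1) {u : ℕ → ℤ} (hu : IsBinary u)
    {m : ℕ} (hm : u (m+2) = 1) :
    0 < ∑' k : ℕ, (u (k+2) : ℝ) * r^(2*k+2) := by
  have hz : (0:ℝ) = ∑' _ : ℕ, (0:ℝ) := by simp
  rw [hz]
  apply Summable.tsum_lt_tsum_of_nonneg (i := m) (fun _ => le_refl 0)
    (fun k => mul_nonneg (bin_cast01 hu (k+2)).1 (pow_nonneg h0.le _))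
    ?_ (summable_gA h0 h1 hu)
  rw [hm]
  simpa using pow_pos h0 (2*m+2)

lemma tval_T {r : ℝ} (h0 : 0 < r) (h1 : r < 1) {u : ℕ → ℤ} (hu : IsBinary u)
    {w : ℕ → ℤ} (hw : EqW w (Shf (Dbl u))) :
    tval (-r) w = (u 1 : ℝ) * (-r) + (1 - r) * ∑' k : ℕ, (u (k+2) : ℝ) * r^(2*k+2) := by
  set A := ∑' k : ℕ, (u (k+2) : ℝ) * r^(2*k+2) with hA
  have hwn : ∀ n : ℕ, 1 ≤ n → w n = u ((n+2)/2) := by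
    intro n hn
    rw [hw n hn]
    rfl
  have hAsum : HasSum (fun k : ℕ => (u (k+2) : ℝ) * r^(2*k+2)) A :=
    (summable_gA h0 h1 hu).hasSum
  have heven : HasSum (fun k : ℕ => (w (2*k+2) : ℝ) * (-r)^(2*k+2)) A := by
    convert hAsum using 2 with k
    rw [hwn (2*k+2) (by omega)]
    have h2 : (2*k+2+2)/2 = k+2 := by omega
    rw [h2, Even.neg_pow ⟨k+1, by ring⟩]
  have hodd : HasSum (fun k : ℕ => (w (2*k+3) : ℝ) * (-r)^(2*k+3)) (-r * A) := by
    have h := hAsum.mul_left (-r)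
    convert h using 2 with k
    · rfl
    rw [hwn (2*k+3) (by omega)]
    have h2 : (2*k+3+2)/2 = k+2 := by omega
    rw [h2, Odd.neg_pow ⟨k+1, by ring⟩]
    ring
  have hF : HasSum (fun i : ℕ => (w (i+2) : ℝ) * (-r)^(i+2)) (A + -r * A) := by
    apply HasSum.even_add_odd
    · exact heven
    · have e : ∀ k : ℕ, 2*k+1+2 = 2*k+3 := fun k => by omega
      simp only [e]
      exact hodd
  have hfull : HasSum (fun i : ℕ => (w (i+1) : ℝ) * (-r)^(i+1))
      ((w 1 : ℝ) * (-r)^1 + (A + -r * A)) := HasSum.zero_add hF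
  unfold tval
  rw [hfull.tsum_eq, hwn 1 (by omega)]
  have h12 : (1+2)/2 = 1 := rfl
  rw [h12]
  ring

theorem stmt15 (r : ℝ) (h0 : 0 < r) (h1 : r < 1) (w : ℕ → ℤ) (hw : MemP w) :
    (AltLe w (fun _ => (1:ℤ)) →
      tval (-r) w ≤ -r/(1+r) ∧ tval (-r) (fun _ => (1:ℤ)) = -r/(1+r) ∧
      (tval (-r) w = -r/(1+r) ↔ EqW w (fun _ => (1:ℤ)))) ∧
    (AltLe (fun _ => (0:ℤ)) w →
      0 ≤ tval (-r) w ∧ (tval (-r) w = 0 ↔ EqW w (fun _ => (0:ℤ)))) := by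
  have hone := tval_one_eq r h0 h1
  have h1r : (0:ℝ) < 1 + r := by linarith
  rcases hw with ⟨u, hu, hw⟩ | ⟨u, hu, hw⟩
  · -- D case
    constructor
    · rintro (halt | heqw)
      · exact absurd halt (dbl_no_alt_top hu hw)
      · have ht : tval (-r) w = -r/(1+r) := by rw [tval_congr heqw, hone]
        exact ⟨le_of_eq ht, hone, ⟨fun _ => heqw, fun _ => ht⟩⟩
    · rintro (halt | heqw)
      · exact absurd halt (dbl_no_alt_bot hu hw)
      · have heqw' : EqW w (fun _ => (0:ℤ)) := fun i hi => (heqw i hi).symm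
        have ht : tval (-r) w = 0 := by rw [tval_congr heqw', tval_zero_eq]
        exact ⟨le_of_eq ht.symm, ⟨fun _ => heqw', fun _ => ht⟩⟩
  · -- T case
    have hwn : ∀ n : ℕ, 1 ≤ n → w n = u ((n+2)/2) := by
      intro n hn
      rw [hw n hn]
      rfl
    have hformula := tval_T h0 h1 hu hw
    set A := ∑' k : ℕ, (u (k+2) : ℝ) * r^(2*k+2) with hA
    have hne1 : (1:ℝ) - r^2 ≠ 0 := by nlinarith
    have hne2 : (1:ℝ) + r ≠ 0 := by linarith
    have hval : (1 - r) * (r^2/(1 - r^2)) = r^2/(1+r) := by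
      field_simp
      ring
    constructor
    · rintro (halt | heqw)
      · obtain ⟨n, hn1, hag, heq⟩ := halt
        have heq' : (-1:ℤ)^n * (1 - w n) = 1 := heq
        rcases alt_parity (shf_dbl_binary hu hw hn1) (Or.inr rfl) heq' with
          ⟨he, hb0, -⟩ | ⟨-, -, hc⟩
        swap
        · exact absurd hc (by omega)
        obtain ⟨m, hm⟩ := he
        have hn2 : n = 2*m := by omega
        subst hn2
        have hm1 : 1 ≤ m := by omega
        have hw1 : w 1 = 1 := hag 1 le_rfl (by omega)
        have hu1 : u 1 = 1 := by
          have h := hwn 1 (by omega); rw [h] at hw1; exact hw1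
        have hum : u (m+1) = 0 := by
          have h := hwn (2*m) (by omega)
          have hdiv : (2*m+2)/2 = m+1 := by omega
          rw [hdiv] at h
          omega
        have hum' : u ((m-1)+2) = 0 := by
          have h : (m-1)+2 = m+1 := by omega
          rw [h]; exact hum
        have hAlt := A_lt h0 h1 hu hum'
        have ht : tval (-r) w = -r + (1 - r) * A := by
          rw [hformula, hu1]; push_cast; ring
        have hlt : tval (-r) w < -r/(1+r) := by
          rw [ht]
          have h2 : (1 - r) * A < (1 - r) * (r^2/(1 - r^2)) :=
            mul_lt_mul_of_pos_left hAlt (by linarith)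
          rw [hval] at h2
          have h3 : -r + r^2/(1+r) = -r/(1+r) := by
            field_simp
            ring
          linarith
        have hne : ¬ EqW w (fun _ => (1:ℤ)) := by
          intro hq
          have h := hq (2*m) hn1
          simp only at h
          omega
        exact ⟨hlt.le, hone, ⟨fun hc => absurd hc (by linarith), fun hc => absurd hc hne⟩⟩
      · have ht : tval (-r) w = -r/(1+r) := by rw [tval_congr heqw, hone]
        exact ⟨le_of_eq ht, hone, ⟨fun _ => heqw, fun _ => ht⟩⟩
    · rintro (halt | heqw)
      · obtain ⟨n, hn1, hag, heq⟩ := halt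
        have heq' : (-1:ℤ)^n * (w n - 0) = 1 := heq
        rcases alt_parity (Or.inl rfl) (shf_dbl_binary hu hw hn1) heq' with
          ⟨he, -, hb1⟩ | ⟨-, hb, -⟩
        swap
        · exact absurd hb (by omega)
        obtain ⟨m, hm⟩ := he
        have hn2 : n = 2*m := by omega
        subst hn2
        have hm1 : 1 ≤ m := by omega
        have hw1 : (0:ℤ) = w 1 := hag 1 le_rfl (by omega)
        have hu1 : u 1 = 0 := by
          have h := hwn 1 (by omega)
          rw [h] at hw1
          exact hw1.symm
        have hum : u (m+1) = 1 := by
          have h := hwn (2*m) (by omega)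
          have hdiv : (2*m+2)/2 = m+1 := by omega
          rw [hdiv] at h
          omega
        have hum' : u ((m-1)+2) = 1 := by
          have h : (m-1)+2 = m+1 := by omega
          rw [h]; exact hum
        have hApos := A_pos h0 h1 hu hum'
        have ht : tval (-r) w = (1 - r) * A := by
          rw [hformula, hu1]; push_cast; ring
        have hpos : 0 < tval (-r) w := by
          rw [ht]
          exact mul_pos (by linarith) hApos
        have hne : ¬ EqW w (fun _ => (0:ℤ)) := by
          intro hq
          have h := hq (2*m) hn1
          simp only at h
          omega
        exact ⟨hpos.le, ⟨fun hc => absurd hc (by linarith), fun hc => absurd hc hne⟩⟩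
      · have heqw' : EqW w (fun _ => (0:ℤ)) := fun i hi => (heqw i hi).symm
        have ht : tval (-r) w = 0 := by rw [tval_congr heqw', tval_zero_eq]
        exact ⟨le_of_eq ht.symm, ⟨fun _ => heqw', fun _ => ht⟩⟩
end
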